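/- arXiv:1307.5455 — 6 statements merged into one kernel-verified Lean document; each statement's English description precedes it below -/
import Mathlib

section
/- Let Ψ be holomorphic on {w ∈ ℂ : |w| > 1}, let c, a₀ ∈ ℂ, and suppose Ψ(w) − c·w → a₀ as |w| → ∞. If 2·w·Ψ′(w) = Ψ(w) − Ψ(−w) for all |w| > 1, then Ψ(w) = c·w + a₀ for all |w| > 1. -/
open Set Filter

private lemma S_open : IsOpen {w : ℂ | 1 < ‖w‖} :=
  isOpen_lt continuous_const continuous_norm

private lemma S_preconnected : IsPreconnected {w : ℂ | 1 < ‖w‖} := by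
  have hrank : 1 < Module.rank ℝ ℂ := by
    rw [Complex.rank_real_complex]; norm_num
  have hprod : IsPreconnected ((Ioi (1:ℝ)) ×ˢ (Metric.sphere (0:ℂ) 1)) :=
    (isPreconnected_Ioi).prod (isPreconnected_sphere hrank 0 1)
  have himg : (fun p : ℝ × ℂ => p.1 • p.2) '' ((Ioi (1:ℝ)) ×ˢ (Metric.sphere (0:ℂ) 1))
      = {w : ℂ | 1 < ‖w‖} := by
    ext z
    constructor
    · rintro ⟨⟨r, u⟩, ⟨hr, hu⟩, rfl⟩
      have hr1 : (1:ℝ) < r := hr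
      have hu1 : ‖u‖ = 1 := by simpa using hu
      simp only [mem_setOf_eq, norm_smul, hu1, mul_one, Real.norm_eq_abs]
      rwa [abs_of_pos (by linarith)]
    · intro hz
      have hz1 : (1:ℝ) < ‖z‖ := hz
      have hz0 : ‖z‖ ≠ 0 := by positivity
      refine ⟨(‖z‖, ‖z‖⁻¹ • z), ⟨hz1, ?_⟩, ?_⟩
      · rw [mem_sphere_zero_iff_norm, norm_smul, Real.norm_eq_abs, abs_inv, abs_norm,
          inv_mul_cancel₀ hz0]
      · show ‖z‖ • ‖z‖⁻¹ • z = z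
        rw [smul_smul, mul_inv_cancel₀ hz0, one_smul]
  rw [← himg]
  exact hprod.image _ (continuous_fst.smul continuous_snd).continuousOn

/-- A function differentiable with zero derivative on the exterior region, tending to `0`
at infinity, vanishes on the region. -/
private lemma vanish_of_deriv_zero {f : ℂ → ℂ}
    (hdf : ∀ z ∈ {w : ℂ | 1 < ‖w‖}, DifferentiableAt ℂ f z)
    (hd0 : ∀ z ∈ {w : ℂ | 1 < ‖w‖}, deriv f z = 0)
    (hlim : Tendsto f (Bornology.cobounded ℂ) (nhds 0)) :
    ∀ z ∈ {w : ℂ | 1 < ‖w‖}, f z = 0 := by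
  set S : Set ℂ := {w : ℂ | 1 < ‖w‖} with hS
  have hSdiff : DifferentiableOn ℂ f S := fun z hz =>
    (hdf z hz).differentiableWithinAt
  have hz₂ : (2:ℂ) ∈ S := by simp [hS]
  -- f is constant on S, equal to f 2
  have hconst : ∀ z ∈ S, f z = f 2 := by
    have hfa : AnalyticOnNhd ℂ f S := hSdiff.analyticOnNhd S_open
    have hca : AnalyticOnNhd ℂ (fun _ => f 2) S := analyticOnNhd_const
    intro z hz
    refine hfa.eqOn_of_preconnected_of_eventuallyEq hca S_preconnected hz₂ ?_ hz
    obtain ⟨ε, hε, hball⟩ := Metric.isOpen_iff.1 S_open 2 hz₂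
    refine Filter.eventuallyEq_of_mem (Metric.ball_mem_nhds 2 hε) (fun x hx => ?_)
    have hfd' : ∀ y ∈ Metric.ball (2:ℂ) ε, fderivWithin ℂ f (Metric.ball (2:ℂ) ε) y = 0 := by
      intro y hy
      rw [fderivWithin_of_isOpen Metric.isOpen_ball hy, ← toSpanSingleton_deriv,
        hd0 y (hball hy)]
      ext; simp
    exact (convex_ball (2:ℂ) ε).is_const_of_fderivWithin_eq_zero
      (hSdiff.mono hball) hfd' hx (Metric.mem_ball_self hε)
  -- the constant is 0
  have hmem : S ∈ Bornology.cobounded ℂ := by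
    have := tendsto_norm_cobounded_atTop (E := ℂ)
    exact this (Ioi_mem_atTop 1)
  have hfeq : f =ᶠ[Bornology.cobounded ℂ] (fun _ => f 2) :=
    Filter.eventuallyEq_of_mem hmem hconst
  have hlim2 : Tendsto (fun _ : ℂ => f 2) (Bornology.cobounded ℂ) (nhds 0) :=
    hlim.congr' hfeq
  have h20 : f 2 = 0 := tendsto_nhds_unique tendsto_const_nhds hlim2
  intro z hz
  rw [hconst z hz, h20]

theorem difference_differential_equation (Ψ : ℂ → ℂ) (c a₀ : ℂ)
    (hdiff : DifferentiableOn ℂ Ψ {w : ℂ | 1 < ‖w‖})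
    (hlim : Tendsto (fun w => Ψ w - c * w) (Bornology.cobounded ℂ) (nhds a₀))
    (heq : ∀ w : ℂ, 1 < ‖w‖ → 2 * w * deriv Ψ w = Ψ w - Ψ (-w)) :
    ∀ w : ℂ, 1 < ‖w‖ → Ψ w = c * w + a₀ := by
  set S : Set ℂ := {w : ℂ | 1 < ‖w‖} with hS
  set g : ℂ → ℂ := fun w => Ψ w - c * w - a₀ with hg
  have hneg_mem : ∀ z : ℂ, z ∈ S → -z ∈ S := by
    intro z hz; simpa [hS] using hz
  have hne : ∀ z : ℂ, z ∈ S → z ≠ 0 := by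
    intro z hz h0
    simp only [hS, mem_setOf_eq, h0, norm_zero] at hz
    linarith
  have hΨat : ∀ z ∈ S, DifferentiableAt ℂ Ψ z := fun z hz =>
    hdiff.differentiableAt (S_open.mem_nhds hz)
  have hgat : ∀ z ∈ S, HasDerivAt g (deriv Ψ z - c) z := by
    intro z hz
    have h1 : HasDerivAt Ψ (deriv Ψ z) z := (hΨat z hz).hasDerivAt
    have h2 : HasDerivAt (fun w : ℂ => c * w) c z := by
      simpa using (hasDerivAt_id z).const_mul c
    exact (h1.sub h2).sub_const a₀
  -- the functional equation for g
  have hgeq : ∀ z ∈ S, 2 * z * (deriv Ψ z - c) = g z - g (-z) := by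
    intro z hz
    have := heq z hz
    simp only [hg]
    ring_nf
    ring_nf at this
    linear_combination this
  -- Step 1: h := g + g ∘ neg vanishes on S
  have hgnegat : ∀ z ∈ S, HasDerivAt (fun w => g (-w)) (-(deriv Ψ (-z) - c)) z := by
    intro z hz
    have := (hgat (-z) (hneg_mem z hz)).comp z (hasDerivAt_neg z)
    simpa [mul_comm, Function.comp_def] using this
  have hodd : ∀ z ∈ S, g (-z) = -g z := by
    have hhat : ∀ z ∈ S, HasDerivAt (fun w => g w + g (-w))
        ((deriv Ψ z - c) + -(deriv Ψ (-z) - c)) z := fun z hz =>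
      (hgat z hz).add (hgnegat z hz)
    have hhd0 : ∀ z ∈ S, deriv (fun w => g w + g (-w)) z = 0 := by
      intro z hz
      have e1 := hgeq z hz
      have e2 := hgeq (-z) (hneg_mem z hz)
      rw [neg_neg] at e2
      have hz0 := hne z hz
      have hsum : 2 * z * ((deriv Ψ z - c) + -(deriv Ψ (-z) - c)) = 0 := by
        linear_combination e1 + e2
      have h2z : (2:ℂ) * z ≠ 0 := mul_ne_zero two_ne_zero hz0
      have h0 : (deriv Ψ z - c) + -(deriv Ψ (-z) - c) = 0 :=
        (mul_eq_zero.mp hsum).resolve_left h2z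
      rw [(hhat z hz).deriv, h0]
    have hhlim : Tendsto (fun w => g w + g (-w)) (Bornology.cobounded ℂ) (nhds 0) := by
      have l1 : Tendsto (fun w => g w) (Bornology.cobounded ℂ) (nhds 0) := by
        have := hlim.sub_const a₀
        simpa [hg, sub_self] using this
      have l2 : Tendsto (fun w => g (-w)) (Bornology.cobounded ℂ) (nhds 0) :=
        l1.comp tendsto_neg_cobounded
      simpa using l1.add l2
    have := vanish_of_deriv_zero
      (f := fun w => g w + g (-w))
      (fun z hz => (hhat z hz).differentiableAt) hhd0 hhlim
    intro z hz
    have h0 := this z hz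
    linear_combination h0
  -- Step 2: k := g / id vanishes on S
  have hkat : ∀ z ∈ S, HasDerivAt (fun w => g w / w)
      (((deriv Ψ z - c) * z - g z * 1) / z ^ 2) z := fun z hz =>
    (hgat z hz).div (hasDerivAt_id z) (hne z hz)
  have hkey : ∀ z ∈ S, z * (deriv Ψ z - c) = g z := by
    intro z hz
    have e1 := hgeq z hz
    rw [hodd z hz] at e1
    linear_combination e1 / 2
  have hkd0 : ∀ z ∈ S, deriv (fun w => g w / w) z = 0 := by
    intro z hz
    rw [(hkat z hz).deriv]
    have := hkey z hz
    rw [div_eq_zero_iff]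
    left
    linear_combination this
  have hglim : Tendsto g (Bornology.cobounded ℂ) (nhds 0) := by
    have := hlim.sub_const a₀
    simpa [hg, sub_self] using this
  have hklim : Tendsto (fun w => g w / w) (Bornology.cobounded ℂ) (nhds 0) := by
    have := hglim.mul tendsto_inv₀_cobounded
    simpa [div_eq_mul_inv] using this
  have hk0 := vanish_of_deriv_zero (f := fun w => g w / w)
    (fun z hz => (hkat z hz).differentiableAt) hkd0 hklim
  intro w hw
  have hg0 : g w / w = 0 := hk0 w hw
  have : g w = 0 := by
    rcases div_eq_zero_iff.mp hg0 with h | h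
    · exact h
    · exact absurd h (hne w hw)
  simp only [hg] at this
  linear_combination this
end

section
/- Let Ψ : {w ∈ ℂ : |w| ≥ 1} → ℂ be continuous and injective, holomorphic on {w : |w| > 1}, and suppose there exists a₀ ∈ ℂ with Ψ(w) − w → a₀ as |w| → ∞. Then (1/2π) ∫_0^{2π} log |Ψ(e^{it}) − Ψ(−e^{it})| dt = log 2. -/
open Set Filter Metric Complex intervalIntegral
-- Step 1: existence of a continuous log on the closed unit disc
lemma exists_log_disc (g : ℂ → ℂ)
    (hc : ContinuousOn g (closedBall (0:ℂ) 1))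
    (hd : ∀ z ∈ ball (0:ℂ) 1, DifferentiableAt ℂ g z)
    (h0 : ∀ z ∈ closedBall (0:ℂ) 1, g z ≠ 0) :
    ∃ F : ℂ → ℂ, ContinuousOn F (closedBall (0:ℂ) 1) ∧
      (∀ z ∈ ball (0:ℂ) 1, DifferentiableAt ℂ F z) ∧
      (∀ z ∈ closedBall (0:ℂ) 1, Complex.exp (F z) = g z) := by
  -- minimum of |g|
  obtain ⟨z₀, hz₀, hmin⟩ := (isCompact_closedBall (0:ℂ) 1).exists_isMinOn
    ⟨0, by simp⟩ (hc.norm)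
  set m : ℝ := ‖g z₀‖ with hm
  have hmpos : 0 < m := norm_pos_iff.2 (h0 z₀ hz₀)
  -- uniform continuity
  have huc : UniformContinuousOn g (closedBall (0:ℂ) 1) :=
    (isCompact_closedBall (0:ℂ) 1).uniformContinuousOn_of_continuous hc
  rw [Metric.uniformContinuousOn_iff] at huc
  obtain ⟨δ, hδpos, hδ⟩ := huc m hmpos
  obtain ⟨n, hn⟩ := exists_nat_gt (1/δ)
  have hnpos : 0 < (n:ℝ) := lt_trans (by positivity) hn
  have hinvn : (1:ℝ)/n < δ := by
    rw [div_lt_iff₀ hnpos]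
    rw [div_lt_iff₀ hδpos] at hn
    nlinarith
  -- membership helper
  have hmem : ∀ (k : ℕ), k ≤ n → ∀ z ∈ closedBall (0:ℂ) 1,
      ((k:ℂ)/n) * z ∈ closedBall (0:ℂ) 1 := by
    intro k hk z hz
    simp only [mem_closedBall, dist_zero_right] at hz ⊢
    rw [norm_mul, norm_div, Complex.norm_natCast, Complex.norm_natCast]
    have : (k:ℝ)/n ≤ 1 := by
      rw [div_le_one hnpos]; exact_mod_cast hk
    calc (k:ℝ)/n * ‖z‖ ≤ 1 * 1 := by
          apply mul_le_mul this hz (norm_nonneg z) zero_le_one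
      _ = 1 := one_mul 1
  -- the ratio function
  set Q : ℕ → ℂ → ℂ := fun k z => g (((k:ℂ)+1)/n * z) / g ((k:ℂ)/n * z) with hQ
  have hmem' : ∀ (k : ℕ), k < n → ∀ z ∈ closedBall (0:ℂ) 1,
      (((k:ℂ)+1)/n) * z ∈ closedBall (0:ℂ) 1 := by
    intro k hk z hz
    have := hmem (k+1) hk z hz
    push_cast at this ⊢
    exact this
  -- the ratio is close to 1
  have hQball : ∀ (k : ℕ), k < n → ∀ z ∈ closedBall (0:ℂ) 1,
      ‖Q k z - 1‖ < 1 := by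
    intro k hk z hz
    have hza := hmem' k hk z hz
    have hzb := hmem k hk.le z hz
    have hgb := h0 _ hzb
    have hdist : dist ((((k:ℂ)+1)/n) * z) (((k:ℂ)/n) * z) < δ := by
      have : (((k:ℂ)+1)/n) * z - ((k:ℂ)/n) * z = (1/n) * z := by ring
      rw [dist_eq_norm, this, norm_mul]
      calc ‖(1:ℂ)/(n:ℂ)‖ * ‖z‖ ≤ (1/n) * 1 := by
            apply mul_le_mul _ _ (norm_nonneg z) (by positivity)
            · simp [norm_div]
            · simpa [mem_closedBall, dist_zero_right] using hz
        _ = 1/n := mul_one _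
        _ < δ := hinvn
    have hnum := hδ _ hza _ hzb hdist
    rw [dist_eq_norm] at hnum
    have hmle : m ≤ ‖g (((k:ℂ)/n) * z)‖ := hmin hzb
    have : Q k z - 1 = (g ((((k:ℂ)+1)/n) * z) - g (((k:ℂ)/n) * z)) / g (((k:ℂ)/n) * z) := by
      rw [hQ]; exact div_sub_one hgb
    rw [this, norm_div, div_lt_one (lt_of_lt_of_le hmpos hmle)]
    exact lt_of_lt_of_le hnum hmle
  have hQslit : ∀ (k : ℕ), k < n → ∀ z ∈ closedBall (0:ℂ) 1,
      Q k z ∈ Complex.slitPlane := by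
    intro k hk z hz
    have h := hQball k hk z hz
    rw [Complex.mem_slitPlane_iff]
    left
    have : |(Q k z - 1).re| ≤ ‖Q k z - 1‖ := Complex.abs_re_le_norm _
    have hre : (Q k z - 1).re = (Q k z).re - 1 := by simp
    rw [hre] at this
    cases' abs_le.1 this with h1 h2
    linarith [lt_of_le_of_lt this h]
  -- the log candidate
  set F : ℂ → ℂ := fun z => Complex.log (g 0) +
      ∑ k ∈ Finset.range n, Complex.log (Q k z) with hF
  refine ⟨F, ?_, ?_, ?_⟩
  · -- continuity
    apply ContinuousOn.add continuousOn_const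
    apply continuousOn_finset_sum
    intro k hk
    rw [Finset.mem_range] at hk
    intro z hz
    have hQc : ContinuousWithinAt (Q k) (closedBall (0:ℂ) 1) z := by
      apply ContinuousWithinAt.div
      · exact (hc _ (hmem' k hk z hz)).comp
          ((continuous_const.mul continuous_id).continuousWithinAt)
          (fun w hw => hmem' k hk w hw)
      · exact (hc _ (hmem k hk.le z hz)).comp
          ((continuous_const.mul continuous_id).continuousWithinAt)
          (fun w hw => hmem k hk.le w hw)
      · exact h0 _ (hmem k hk.le z hz)
    exact (continuousAt_clog (hQslit k hk z hz)).comp_continuousWithinAt hQc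
  · -- differentiability
    intro z hz
    apply DifferentiableAt.add (differentiableAt_const _)
    apply DifferentiableAt.fun_sum
    intro k hk
    rw [Finset.mem_range] at hk
    have hzball : ∀ (c : ℂ), ‖c‖ ≤ 1 → c * z ∈ ball (0:ℂ) 1 := by
      intro c hcle
      simp only [mem_ball, dist_zero_right] at hz ⊢
      rw [norm_mul]
      calc ‖c‖ * ‖z‖ ≤ 1 * ‖z‖ := mul_le_mul_of_nonneg_right hcle (norm_nonneg z)
        _ = ‖z‖ := one_mul _
        _ < 1 := hz
    have hc1 : ‖((k:ℂ)+1)/(n:ℂ)‖ ≤ 1 := by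
      rw [norm_div]
      have : ((k:ℂ)+1) = ((k+1:ℕ):ℂ) := by push_cast; ring
      rw [this, Complex.norm_natCast, Complex.norm_natCast, div_le_one hnpos]
      exact_mod_cast hk
    have hc2 : ‖((k:ℂ))/(n:ℂ)‖ ≤ 1 := by
      rw [norm_div, Complex.norm_natCast, Complex.norm_natCast, div_le_one hnpos]
      exact_mod_cast hk.le
    have hQd : DifferentiableAt ℂ (Q k) z := by
      apply DifferentiableAt.div
      · exact (hd _ (hzball _ hc1)).comp z
          ((differentiable_id.const_mul _).differentiableAt)
      · exact (hd _ (hzball _ hc2)).comp z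
          ((differentiable_id.const_mul _).differentiableAt)
      · exact h0 _ (hmem k hk.le z (ball_subset_closedBall hz))
    exact (Complex.differentiableAt_log
      (hQslit k hk z (ball_subset_closedBall hz))).comp z hQd
  · -- exp F = g
    intro z hz
    have key : ∀ j : ℕ, j ≤ n →
        Complex.exp (Complex.log (g 0) + ∑ k ∈ Finset.range j, Complex.log (Q k z))
          = g (((j:ℂ)/n) * z) := by
      intro j hj
      induction j with
      | zero => simp [Complex.exp_log (h0 0 (by simp))]
      | succ j ih =>
        have hj' : j ≤ n := Nat.le_of_succ_le hj
        have hjlt : j < n := hj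
        have hQne : Q j z ≠ 0 := by
          apply div_ne_zero
          · exact h0 _ (hmem' j hjlt z hz)
          · exact h0 _ (hmem j hj' z hz)
        rw [Finset.sum_range_succ, ← add_assoc, Complex.exp_add, ih hj',
          Complex.exp_log hQne]
        have hgne : g (((j:ℂ)/n) * z) ≠ 0 := h0 _ (hmem j hj' z hz)
        rw [hQ]
        rw [mul_comm, div_mul_cancel₀ _ hgne]
        norm_cast
    have := key n le_rfl
    rwa [div_self (by exact_mod_cast hnpos.ne' : (n:ℂ) ≠ 0), one_mul] at this

lemma mean_value_log_abs (g : ℂ → ℂ)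
    (hc : ContinuousOn g (closedBall (0:ℂ) 1))
    (hd : ∀ z ∈ ball (0:ℂ) 1, DifferentiableAt ℂ g z)
    (h0 : ∀ z ∈ closedBall (0:ℂ) 1, g z ≠ 0) :
    ∫ t in (0:ℝ)..(2*Real.pi), Real.log (‖g (circleMap 0 1 t)‖)
      = 2 * Real.pi * Real.log (‖g 0‖) := by
  obtain ⟨F, hFc, hFd, hFg⟩ := exists_log_disc g hc hd h0
  have hcauchy := Complex.circleIntegral_sub_center_inv_smul_of_differentiable_on_off_countable
    (one_pos) Set.countable_empty hFc (fun z hz => hFd z hz.1)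
  rw [circleIntegral] at hcauchy
  have hsimp : ∀ θ : ℝ, deriv (circleMap 0 1) θ •
      ((circleMap 0 1 θ - 0)⁻¹ • F (circleMap 0 1 θ)) = Complex.I * F (circleMap 0 1 θ) := by
    intro θ
    rw [deriv_circleMap]
    have hne : circleMap 0 1 θ ≠ 0 := by simpa using (circleMap_eq_center_iff (c:=0) (R:=1) (θ:=θ)).not.2 one_ne_zero
    simp only [smul_eq_mul, sub_zero]
    field_simp
  simp only [hsimp] at hcauchy
  rw [intervalIntegral.integral_const_mul] at hcauchy
  have hI : (∫ t in (0:ℝ)..(2*Real.pi), F (circleMap 0 1 t)) = 2 * Real.pi * F 0 := by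
    have := hcauchy
    rw [smul_eq_mul] at this
    have h2 : Complex.I * (∫ t in (0:ℝ)..(2*Real.pi), F (circleMap 0 1 t))
        = Complex.I * (2 * Real.pi * F 0) := by
      rw [this]; push_cast; ring
    exact mul_left_cancel₀ Complex.I_ne_zero h2
  -- take real parts
  have hmemc : ∀ θ : ℝ, circleMap 0 1 θ ∈ closedBall (0:ℂ) 1 := by
    intro θ; simp [circleMap, dist_zero_right]
  have hFcont : Continuous fun t : ℝ => F (circleMap 0 1 t) :=
    hFc.comp_continuous (continuous_circleMap 0 1) hmemc
  have hint : IntervalIntegrable (fun t : ℝ => F (circleMap 0 1 t))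
      MeasureTheory.volume 0 (2*Real.pi) := hFcont.intervalIntegrable _ _
  have hre : (∫ t in (0:ℝ)..(2*Real.pi), F (circleMap 0 1 t)).re
      = ∫ t in (0:ℝ)..(2*Real.pi), (F (circleMap 0 1 t)).re := by
    exact (Complex.reCLM.intervalIntegral_comp_comm hint).symm
  have hrelog : ∀ z ∈ closedBall (0:ℂ) 1, (F z).re = Real.log (‖g z‖) := by
    intro z hz
    have h1 : ‖g z‖ = Real.exp (F z).re := by
      rw [← hFg z hz, Complex.norm_exp]
    rw [h1, Real.log_exp]
  calc ∫ t in (0:ℝ)..(2*Real.pi), Real.log (‖g (circleMap 0 1 t)‖)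
      = ∫ t in (0:ℝ)..(2*Real.pi), (F (circleMap 0 1 t)).re := by
        apply intervalIntegral.integral_congr
        intro t _
        exact (hrelog _ (hmemc t)).symm
    _ = (∫ t in (0:ℝ)..(2*Real.pi), F (circleMap 0 1 t)).re := hre.symm
    _ = (2 * Real.pi * F 0 : ℂ).re := by rw [hI]
    _ = 2 * Real.pi * (F 0).re := by
        simp [Complex.mul_re]
    _ = 2 * Real.pi * Real.log (‖g 0‖) := by
        rw [hrelog 0 (by simp)]

theorem solynin_mean_value (Ψ : ℂ → ℂ) (a₀ : ℂ)
    (hcont : ContinuousOn Ψ {w : ℂ | 1 ≤ ‖w‖})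
    (hinj : Set.InjOn Ψ {w : ℂ | 1 ≤ ‖w‖})
    (hdiff : DifferentiableOn ℂ Ψ {w : ℂ | 1 < ‖w‖})
    (hlim : Tendsto (fun w => Ψ w - w) (Bornology.cobounded ℂ) (nhds a₀)) :
    (1 / (2 * Real.pi)) * ∫ t in (0:ℝ)..(2 * Real.pi),
        Real.log (‖Ψ (Complex.exp (t * Complex.I)) -
          Ψ (-Complex.exp (t * Complex.I))‖) = Real.log 2 := by
  set g : ℂ → ℂ := fun z => if z = 0 then 2 else z * (Ψ z⁻¹ - Ψ (-z⁻¹)) with hgdef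
  have hg0 : g 0 = 2 := by simp [hgdef]
  -- membership of inverses in the closed exterior
  have hUmem : ∀ z : ℂ, z ≠ 0 → ‖z‖ ≤ 1 → z⁻¹ ∈ {w : ℂ | 1 ≤ ‖w‖} := by
    intro z hz hz1
    have hpos : 0 < ‖z‖ := norm_pos_iff.2 hz
    simp only [mem_setOf_eq, norm_inv]
    rw [le_inv_comm₀ one_pos hpos]
    simpa using hz1
  have hUmem' : ∀ z : ℂ, z ≠ 0 → ‖z‖ ≤ 1 → -z⁻¹ ∈ {w : ℂ | 1 ≤ ‖w‖} := by
    intro z hz hz1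
    have := hUmem z hz hz1
    simpa [mem_setOf_eq, norm_neg] using this
  -- nonvanishing
  have hne : ∀ z ∈ closedBall (0:ℂ) 1, g z ≠ 0 := by
    intro z hz
    by_cases hz0 : z = 0
    · subst hz0; rw [hg0]; norm_num
    · simp only [mem_closedBall, dist_zero_right] at hz
      simp only [hgdef, if_neg hz0]
      apply mul_ne_zero hz0
      rw [sub_ne_zero]
      intro heq
      have h12 := hinj (hUmem z hz0 hz) (hUmem' z hz0 hz) heq
      have : z⁻¹ = 0 := by
        have h2 : (2:ℂ) * z⁻¹ = 0 := by linear_combination h12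
        rcases mul_eq_zero.mp h2 with h | h
        · norm_num at h
        · exact h
      exact hz0 (inv_eq_zero.mp this)
  -- continuity on the punctured closed ball
  have hfuncont : ContinuousOn (fun w : ℂ => w * (Ψ w⁻¹ - Ψ (-w⁻¹)))
      (closedBall (0:ℂ) 1 \ {0}) := by
    have hmapsto : MapsTo (fun w : ℂ => w⁻¹) (closedBall (0:ℂ) 1 \ {0})
        {w : ℂ | 1 ≤ ‖w‖} := by
      intro w hw
      exact hUmem w hw.2 (by simpa [mem_closedBall, dist_zero_right] using hw.1)
    have hmapsto' : MapsTo (fun w : ℂ => -w⁻¹) (closedBall (0:ℂ) 1 \ {0})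
        {w : ℂ | 1 ≤ ‖w‖} := by
      intro w hw
      exact hUmem' w hw.2 (by simpa [mem_closedBall, dist_zero_right] using hw.1)
    have hinvc : ContinuousOn (fun w : ℂ => w⁻¹) (closedBall (0:ℂ) 1 \ {0}) :=
      continuousOn_inv₀.mono (fun w hw => hw.2)
    exact continuousOn_id.mul
      ((hcont.comp hinvc hmapsto).sub (hcont.comp hinvc.neg hmapsto'))
  -- continuity at 0
  have hE : Tendsto (fun w : ℂ => (Ψ w - w) - (Ψ (-w) - (-w)))
      (Bornology.cobounded ℂ) (nhds 0) := by
    have hneg : Tendsto (fun w : ℂ => Ψ (-w) - (-w)) (Bornology.cobounded ℂ) (nhds a₀) :=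
      hlim.comp tendsto_neg_cobounded
    simpa using hlim.sub hneg
  have hinvcb : Tendsto (fun z : ℂ => z⁻¹) (nhdsWithin (0:ℂ) {(0:ℂ)}ᶜ)
      (Bornology.cobounded ℂ) := by
    rw [← inv_nhdsNE_zero]
    exact Filter.tendsto_map
  have hg2 : Tendsto g (nhds (0:ℂ)) (nhds 2) := by
    rw [← nhdsNE_sup_pure (0:ℂ), tendsto_sup]
    constructor
    · have hzero : Tendsto (fun z : ℂ => z * ((Ψ z⁻¹ - z⁻¹) - (Ψ (-z⁻¹) - (-z⁻¹))))
          (nhdsWithin (0:ℂ) {(0:ℂ)}ᶜ) (nhds 0) := by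
        have h1 : Tendsto (fun z : ℂ => z) (nhdsWithin (0:ℂ) {(0:ℂ)}ᶜ) (nhds 0) :=
          tendsto_id.mono_left nhdsWithin_le_nhds
        have h2 := hE.comp hinvcb
        simpa using h1.mul h2
      have h3 : Tendsto (fun z : ℂ => z * ((Ψ z⁻¹ - z⁻¹) - (Ψ (-z⁻¹) - (-z⁻¹))) + 2)
          (nhdsWithin (0:ℂ) {(0:ℂ)}ᶜ) (nhds 2) := by
        simpa using hzero.add (tendsto_const_nhds (x := (2:ℂ)))
      refine h3.congr' ?_
      filter_upwards [self_mem_nhdsWithin] with z hz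
      have hz0 : z ≠ 0 := hz
      simp only [hgdef, if_neg hz0]
      field_simp
      ring
    · have := tendsto_pure_nhds g (0:ℂ)
      rwa [hg0] at this
  have hgc : ContinuousOn g (closedBall (0:ℂ) 1) := by
    intro z hz
    by_cases hz0 : z = 0
    · subst hz0
      have hca : ContinuousAt g 0 := by
        unfold ContinuousAt
        rw [hg0]
        exact hg2
      exact hca.continuousWithinAt
    · have ht : closedBall (0:ℂ) 1 \ {0} ∈ nhdsWithin z (closedBall (0:ℂ) 1) := by
        rw [diff_eq]
        exact Filter.inter_mem self_mem_nhdsWithin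
          (mem_nhdsWithin_of_mem_nhds (isOpen_compl_singleton.mem_nhds hz0))
      have hcw : ContinuousWithinAt g (closedBall (0:ℂ) 1 \ {0}) z := by
        apply (hfuncont.congr (fun w hw => by simp only [hgdef]; exact if_neg hw.2)) z ⟨hz, hz0⟩
      exact hcw.mono_of_mem_nhdsWithin ht
  -- differentiability on the open ball
  have hopenU : IsOpen {w : ℂ | 1 < ‖w‖} := isOpen_lt continuous_const continuous_norm
  have hΨat : ∀ w : ℂ, 1 < ‖w‖ → DifferentiableAt ℂ Ψ w := fun w hw =>
    hdiff.differentiableAt (hopenU.mem_nhds hw)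
  have hgd : ∀ z ∈ ball (0:ℂ) 1, DifferentiableAt ℂ g z := by
    have hdball : DifferentiableOn ℂ g (ball (0:ℂ) 1) := by
      rw [← Complex.differentiableOn_compl_singleton_and_continuousAt_iff
        (isOpen_ball.mem_nhds (by simp : (0:ℂ) ∈ ball (0:ℂ) 1))]
      constructor
      · intro z hz
        obtain ⟨hz1, hz0'⟩ := hz
        have hz0 : z ≠ 0 := hz0'
        have hlt : ‖z‖ < 1 := by simpa [mem_ball, dist_zero_right] using hz1
        have hpos : 0 < ‖z‖ := norm_pos_iff.2 hz0
        have hinvgt : 1 < ‖z⁻¹‖ := by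
          rw [norm_inv]
          have h := mul_inv_cancel₀ hpos.ne'
          nlinarith [inv_pos.2 hpos]
        have hinvgt' : 1 < ‖-z⁻¹‖ := by rwa [norm_neg]
        have hda : DifferentiableAt ℂ (fun w : ℂ => w * (Ψ w⁻¹ - Ψ (-w⁻¹))) z := by
          apply DifferentiableAt.mul differentiableAt_id
          apply DifferentiableAt.sub
          · exact (hΨat _ hinvgt).comp z (differentiableAt_inv hz0)
          · exact (hΨat _ hinvgt').comp z (differentiableAt_inv hz0).neg
        have hev : g =ᶠ[nhds z] (fun w : ℂ => w * (Ψ w⁻¹ - Ψ (-w⁻¹))) := by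
          filter_upwards [isOpen_compl_singleton.mem_nhds hz0] with w hw
          simp only [hgdef]
          exact if_neg (hw : w ≠ (0:ℂ))
        exact (hda.congr_of_eventuallyEq hev).differentiableWithinAt
      · unfold ContinuousAt
        rw [hg0]
        exact hg2
    intro z hz
    exact hdball.differentiableAt (isOpen_ball.mem_nhds hz)
  -- mean value
  have hmv := mean_value_log_abs g hgc hgd hne
  rw [hg0] at hmv
  have habs2 : ‖(2:ℂ)‖ = 2 := by norm_num
  rw [habs2] at hmv
  -- boundary identification
  set φ : ℝ → ℝ := fun s => Real.log (‖Ψ (Complex.exp (s * Complex.I)) -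
    Ψ (-Complex.exp (s * Complex.I))‖) with hφdef
  have hbdry : ∀ t : ℝ, Real.log (‖g (circleMap 0 1 t)‖) = φ (-t) := by
    intro t
    have he : circleMap 0 1 t = Complex.exp (t * Complex.I) := by simp [circleMap]
    have hne0 : Complex.exp ((t:ℂ) * Complex.I) ≠ 0 := Complex.exp_ne_zero _
    rw [he]
    simp only [hgdef, if_neg hne0]
    rw [norm_mul]
    have habs1 : ‖Complex.exp ((t:ℂ) * Complex.I)‖ = 1 := by
      rw [Complex.norm_exp]; simp
    have hinveq : (Complex.exp ((t:ℂ) * Complex.I))⁻¹ =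
        Complex.exp (((-t:ℝ):ℂ) * Complex.I) := by
      rw [← Complex.exp_neg]
      push_cast
      ring_nf
    rw [habs1, one_mul, hinveq, hφdef]
  have hper : Function.Periodic φ (2 * Real.pi) := by
    intro s
    have hexp : Complex.exp ((↑(s + 2*Real.pi)) * Complex.I) =
        Complex.exp ((s:ℂ) * Complex.I) := by
      push_cast
      rw [add_mul, Complex.exp_add]
      have : Complex.exp (2 * (Real.pi:ℂ) * Complex.I) = 1 := Complex.exp_two_pi_mul_I
      rw [this, mul_one]
    simp only [hφdef, hexp]
  have hint : (∫ t in (0:ℝ)..(2*Real.pi), φ t) = 2 * Real.pi * Real.log 2 := by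
    have h1 : (∫ t in (0:ℝ)..(2*Real.pi), φ (-t)) = ∫ t in (0:ℝ)..(2*Real.pi), φ t := by
      rw [intervalIntegral.integral_comp_neg]
      have h2 := hper.intervalIntegral_add_eq (-(2*Real.pi)) 0
      simpa using h2
    rw [← h1]
    rw [← hmv]
    apply intervalIntegral.integral_congr
    intro t _
    exact (hbdry t).symm
  rw [hint]
  have hpi : (2 * Real.pi) ≠ 0 := by positivity
  field_simp
end

section
/- Let p_1, …, p_m be nonzero polynomials with complex coefficients, let p = ∏_{k=1}^m p_k, and let n = deg p. Then ∏_{k=1}^m ‖p_k‖_D ≤ 2^n ‖p‖_D, where D = {z ∈ ℂ : |z| ≤ 1} is the closed unit disk. -/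
open Polynomial Set Metric Finset

/-- The sup norm of a polynomial on a set `E ⊆ ℂ`. -/
noncomputable def polyNorm (E : Set ℂ) (p : Polynomial ℂ) : ℝ :=
  ⨆ z : E, ‖p.eval (z : ℂ)‖

namespace MahlerAux

namespace Complex

noncomputable def abs : AbsoluteValue ℂ ℝ := IsAbsoluteValue.toAbsoluteValue (norm : ℂ → ℝ)

lemma norm_eq_abs (z : ℂ) : ‖z‖ = abs z := rfl

lemma abs_exp (z : ℂ) : abs (_root_.Complex.exp z) = Real.exp z.re := _root_.Complex.norm_exp z

lemma abs_conj (z : ℂ) : abs ((starRingEnd ℂ) z) = abs z := _root_.Complex.norm_conj z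

lemma normSq_eq_abs (z : ℂ) : _root_.Complex.normSq z = abs z ^ 2 :=
  _root_.Complex.normSq_eq_norm_sq z

end Complex

abbrev D : Set ℂ := closedBall (0:ℂ) 1

lemma bdd (p : ℂ[X]) : BddAbove (Set.range (fun z : D => Complex.abs (p.eval z))) := by
  have h : Set.range (fun z : D => Complex.abs (p.eval z))
      = (fun z => Complex.abs (p.eval z)) '' D := by
    exact (Set.image_eq_range (fun z => Complex.abs (p.eval z)) D).symm
  rw [h]
  exact ((isCompact_closedBall _ _).image (by simp only [← Complex.norm_eq_abs]; fun_prop)).bddAbove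

lemma eval_le_polyNorm (p : ℂ[X]) {z : ℂ} (hz : z ∈ D) :
    Complex.abs (p.eval z) ≤ polyNorm D p :=
  le_ciSup (bdd p) (⟨z, hz⟩ : D)

lemma polyNorm_nonneg (p : ℂ[X]) : 0 ≤ polyNorm D p :=
  le_trans (AbsoluteValue.nonneg _ _) (eval_le_polyNorm p (by simp : (0:ℂ) ∈ D))

lemma polyNorm_le (p : ℂ[X]) {c : ℝ} (h : ∀ z ∈ D, Complex.abs (p.eval z) ≤ c) :
    polyNorm D p ≤ c :=
  ciSup_le fun z => h z z.2



lemma abs_coeff_le (q : ℂ[X]) (n : ℕ) (hq : q.natDegree ≤ n) {c : ℝ}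
    (hc : ∀ z : ℂ, Complex.abs z = 1 → Complex.abs (q.eval z) ≤ c) :
    Complex.abs (q.coeff n) ≤ c := by
  set N := n + 1 with hN
  set ζ : ℂ := Complex.exp (2 * Real.pi * Complex.I / N) with hζdef
  have hζ : IsPrimitiveRoot ζ N := Complex.isPrimitiveRoot_exp N (Nat.succ_ne_zero n)
  have habsζ : Complex.abs ζ = 1 := by
    rw [hζdef, Complex.abs_exp]
    norm_num [Complex.div_re]
  have key : ∑ k ∈ range N, q.eval (ζ ^ k) * ζ ^ k = (N : ℂ) * q.coeff n := by
    have heval : ∀ x : ℂ, q.eval x = ∑ j ∈ range N, q.coeff j * x ^ j := fun x =>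
      q.eval_eq_sum_range' (Nat.lt_succ_of_le hq) x
    have step : ∀ k, q.eval (ζ ^ k) * ζ ^ k = ∑ j ∈ range N, q.coeff j * (ζ ^ (j+1)) ^ k := by
      intro k
      rw [heval, Finset.sum_mul]
      refine Finset.sum_congr rfl fun j _ => ?_
      rw [mul_assoc, ← pow_mul, ← pow_add, ← pow_mul]
      congr 2
      ring
    simp_rw [step]
    rw [Finset.sum_comm]
    have inner : ∀ j ∈ range N, (∑ k ∈ range N, q.coeff j * (ζ ^ (j+1)) ^ k)
        = if j = n then (N : ℂ) * q.coeff n else 0 := by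
      intro j hj
      rw [← Finset.mul_sum]
      rcases eq_or_ne j n with rfl | hne
      · rw [if_pos rfl]
        have h1 : ζ ^ (j + 1) = 1 := hζ.pow_eq_one
        simp [h1, mul_comm]
      · rw [if_neg hne]
        have h1 : ζ ^ (j + 1) ≠ 1 := by
          intro h
          have hdvd : N ∣ j + 1 := hζ.dvd_of_pow_eq_one _ h
          have hle : j + 1 ≤ N := Nat.succ_le_of_lt (Finset.mem_range.mp hj)
          have hge : N ≤ j + 1 := Nat.le_of_dvd (Nat.succ_pos j) hdvd
          omega
        have h2 : (ζ ^ (j + 1)) ^ N = 1 := by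
          rw [← pow_mul, mul_comm, pow_mul, hζ.pow_eq_one, one_pow]
        rw [geom_sum_eq h1, h2]
        simp
    rw [Finset.sum_congr rfl inner, Finset.sum_ite_eq' (range N) n, if_pos (by simp [hN])]
  have hbound : (N : ℝ) * Complex.abs (q.coeff n) ≤ (N : ℝ) * c := by
    calc (N : ℝ) * Complex.abs (q.coeff n) = Complex.abs ((N : ℂ) * q.coeff n) := by
          rw [map_mul]; simp [← Complex.norm_eq_abs]
      _ = Complex.abs (∑ k ∈ range N, q.eval (ζ ^ k) * ζ ^ k) := by rw [key]
      _ ≤ ∑ k ∈ range N, Complex.abs (q.eval (ζ ^ k) * ζ ^ k) :=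
          AbsoluteValue.sum_le _ _ _
      _ ≤ ∑ k ∈ range N, c := by
          refine Finset.sum_le_sum fun k _ => ?_
          rw [map_mul, map_pow, habsζ, one_pow, mul_one]
          exact hc _ (by rw [map_pow, habsζ, one_pow])
      _ = (N : ℝ) * c := by simp [mul_comm]
  have hNpos : (0:ℝ) < N := by positivity
  exact le_of_mul_le_mul_left hbound hNpos


noncomputable def mMeasure (p : ℂ[X]) : ℝ :=
  Complex.abs p.leadingCoeff * (p.roots.map (fun r => max 1 (Complex.abs r))).prod

lemma one_le_maxprod (s : Multiset ℂ) :
    1 ≤ (s.map (fun r => max 1 (Complex.abs r))).prod := by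
  induction s using Multiset.induction with
  | empty => simp
  | cons a t ih =>
    simp only [Multiset.map_cons, Multiset.prod_cons]
    nlinarith [le_max_left 1 (Complex.abs a)]

lemma maxprod_nonneg (s : Multiset ℂ) :
    0 ≤ (s.map (fun r => max 1 (Complex.abs r))).prod :=
  le_trans zero_le_one (one_le_maxprod s)

lemma mMeasure_nonneg (p : ℂ[X]) : 0 ≤ mMeasure p :=
  mul_nonneg (AbsoluteValue.nonneg _ _) (maxprod_nonneg _)

lemma mMeasure_mul {p q : ℂ[X]} (hp : p ≠ 0) (hq : q ≠ 0) :
    mMeasure (p * q) = mMeasure p * mMeasure q := by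
  unfold mMeasure
  rw [leadingCoeff_mul, map_mul, roots_mul (mul_ne_zero hp hq), Multiset.map_add,
    Multiset.prod_add]
  ring

lemma mMeasure_prod {m : ℕ} (p : Fin m → ℂ[X]) (hp : ∀ k, p k ≠ 0) :
    mMeasure (∏ k, p k) = ∏ k, mMeasure (p k) := by
  classical
  induction (univ : Finset (Fin m)) using Finset.cons_induction with
  | empty => simp [mMeasure]
  | cons a s ha ih =>
    rw [Finset.prod_cons, Finset.prod_cons, mMeasure_mul (hp a)
      (Finset.prod_ne_zero_iff.mpr fun i _ => hp i), ih]

lemma mMeasure_le_polyNorm (p : ℂ[X]) : mMeasure p ≤ polyNorm D p := by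
  have hcard : Multiset.card p.roots = p.natDegree :=
    splits_iff_card_roots.mp (IsAlgClosed.splits p)
  set f : ℂ → ℂ[X] :=
    fun r => if 1 < Complex.abs r then C ((starRingEnd ℂ) r) * X - 1 else X - C r with hf
  set q : ℂ[X] := C p.leadingCoeff * (p.roots.map f).prod with hq
  have hfactor : ∀ (z r : ℂ), Complex.abs z = 1 →
      Complex.abs ((f r).eval z) = Complex.abs (z - r) := by
    intro z r hz
    simp only [hf]
    split_ifs with h
    · simp only [eval_sub, eval_mul, eval_C, eval_X, eval_one]
      have hz1 : z * (starRingEnd ℂ) z = 1 := by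
        rw [Complex.mul_conj]
        norm_cast
        rw [Complex.normSq_eq_abs, hz]
        norm_num
      have hrw : (starRingEnd ℂ) r * z - 1 = z * ((starRingEnd ℂ) r - (starRingEnd ℂ) z) := by
        rw [mul_sub, hz1]; ring
      rw [hrw, map_mul, hz, one_mul, ← map_sub, Complex.abs_conj, AbsoluteValue.map_sub]
    · simp
  have heval : ∀ z : ℂ, Complex.abs z = 1 →
      Complex.abs (q.eval z) = Complex.abs (p.eval z) := by
    intro z hz
    conv_rhs => rw [← C_leadingCoeff_mul_prod_multiset_X_sub_C hcard]
    rw [hq, eval_mul, eval_mul, eval_C, map_mul, map_mul, eval_multiset_prod,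
      eval_multiset_prod, map_multiset_prod, map_multiset_prod, Multiset.map_map,
      Multiset.map_map, Multiset.map_map, Multiset.map_map]
    congr 1
    refine congrArg _ (Multiset.map_congr rfl fun r _ => ?_)
    simp only [Function.comp_apply]
    rw [hfactor z r hz]
    simp
  have hlead : Complex.abs q.leadingCoeff = mMeasure p := by
    rw [hq, leadingCoeff_mul, leadingCoeff_C, map_mul, leadingCoeff_multiset_prod,
      Multiset.map_map, map_multiset_prod, Multiset.map_map]
    unfold mMeasure
    congr 1
    refine congrArg _ (Multiset.map_congr rfl fun r _ => ?_)
    simp only [Function.comp_apply, hf]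
    split_ifs with h
    · have hr : (starRingEnd ℂ) r ≠ 0 := by
        intro h0
        have h1 : r = 0 := by simpa using congrArg (starRingEnd ℂ) h0
        rw [h1] at h
        norm_num at h
      have : C ((starRingEnd ℂ) r) * X - 1 = C ((starRingEnd ℂ) r) * X + C (-1) := by
        rw [map_neg, map_one]; ring
      rw [this, leadingCoeff_linear hr, Complex.abs_conj, max_eq_right h.le]
    · rw [(monic_X_sub_C r).leadingCoeff, map_one, max_eq_left (not_lt.mp h)]
  calc mMeasure p = Complex.abs (q.coeff q.natDegree) := hlead.symm
    _ ≤ polyNorm D p := by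
        refine abs_coeff_le q q.natDegree le_rfl fun z hz => ?_
        rw [heval z hz]
        exact eval_le_polyNorm p (by simpa [Complex.norm_eq_abs] using hz.le)

lemma prod_abs_le_prod_max (t : Multiset ℂ) :
    (t.map Complex.abs).prod ≤ (t.map (fun r => max 1 (Complex.abs r))).prod := by
  induction t using Multiset.induction with
  | empty => simp
  | cons a t ih =>
    simp only [Multiset.map_cons, Multiset.prod_cons]
    refine mul_le_mul (le_max_right _ _) ih ?_ ?_
    · exact Multiset.prod_nonneg fun x hx => by
        obtain ⟨r, _, rfl⟩ := Multiset.mem_map.mp hx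
        positivity
    · exact le_trans zero_le_one (le_max_left _ _)

lemma abs_esymm_le (s : Multiset ℂ) (j : ℕ) :
    Complex.abs (s.esymm j) ≤ ((Multiset.card s).choose j : ℝ) *
      (s.map (fun r => max 1 (Complex.abs r))).prod := by
  set B : ℝ := (s.map (fun r => max 1 (Complex.abs r))).prod with hB
  unfold Multiset.esymm
  calc Complex.abs ((s.powersetCard j).map Multiset.prod).sum
      ≤ (((s.powersetCard j).map Multiset.prod).map Complex.abs).sum := by
        simpa [Complex.norm_eq_abs, Multiset.map_map, Function.comp] using
          norm_multiset_sum_le ((s.powersetCard j).map Multiset.prod)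
    _ ≤ Multiset.card (((s.powersetCard j).map Multiset.prod).map Complex.abs) • B := by
        refine Multiset.sum_le_card_nsmul _ _ fun x hx => ?_
        simp only [Multiset.map_map, Multiset.mem_map, Function.comp_apply] at hx
        obtain ⟨t, ht, rfl⟩ := hx
        have hts : t ≤ s := (Multiset.mem_powersetCard.mp ht).1
        obtain ⟨u, rfl⟩ := Multiset.le_iff_exists_add.mp hts
        calc Complex.abs t.prod = (t.map Complex.abs).prod := by
              rw [map_multiset_prod]
          _ ≤ (t.map (fun r => max 1 (Complex.abs r))).prod := prod_abs_le_prod_max t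
          _ ≤ B := by
              rw [hB, Multiset.map_add, Multiset.prod_add]
              exact le_mul_of_one_le_right
                (le_trans zero_le_one (one_le_maxprod t)) (one_le_maxprod u)
    _ = ((Multiset.card s).choose j : ℝ) * B := by
        rw [Multiset.card_map, Multiset.card_map, Multiset.card_powersetCard,
          nsmul_eq_mul]

lemma polyNorm_le_two_pow (p : ℂ[X]) : polyNorm D p ≤ 2 ^ p.natDegree * mMeasure p := by
  have hcard : Multiset.card p.roots = p.natDegree :=
    splits_iff_card_roots.mp (IsAlgClosed.splits p)
  set n := p.natDegree with hn
  have hcoeff : ∀ k ∈ range (n + 1), Complex.abs (p.coeff k) ≤ (n.choose k : ℝ) * mMeasure p := by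
    intro k hk
    have hkn : k ≤ n := Nat.lt_succ_iff.mp (Finset.mem_range.mp hk)
    rw [coeff_eq_esymm_roots_of_card hcard hkn, map_mul, map_mul, map_pow, AbsoluteValue.map_neg, map_one,
      one_pow, mul_one]
    calc Complex.abs p.leadingCoeff * Complex.abs (p.roots.esymm (n - k))
        ≤ Complex.abs p.leadingCoeff * (((Multiset.card p.roots).choose (n - k) : ℝ) *
          (p.roots.map (fun r => max 1 (Complex.abs r))).prod) := by
          exact mul_le_mul_of_nonneg_left (abs_esymm_le _ _) (by positivity)
      _ = (n.choose k : ℝ) * mMeasure p := by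
          rw [hcard, Nat.choose_symm hkn, mMeasure]
          ring
  refine polyNorm_le p fun z hz => ?_
  have hz1 : Complex.abs z ≤ 1 := by
    simpa [Complex.norm_eq_abs] using mem_closedBall_zero_iff.mp hz
  calc Complex.abs (p.eval z)
      ≤ ∑ k ∈ range (n + 1), Complex.abs (p.coeff k * z ^ k) := by
        rw [eval_eq_sum_range]
        exact AbsoluteValue.sum_le _ _ _
    _ ≤ ∑ k ∈ range (n + 1), (n.choose k : ℝ) * mMeasure p := by
        refine Finset.sum_le_sum fun k hk => ?_
        rw [map_mul, map_pow]
        calc Complex.abs (p.coeff k) * Complex.abs z ^ k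
            ≤ Complex.abs (p.coeff k) * 1 := by
              exact mul_le_mul_of_nonneg_left
                (pow_le_one₀ (by positivity) hz1) (by positivity)
          _ = Complex.abs (p.coeff k) := mul_one _
          _ ≤ (n.choose k : ℝ) * mMeasure p := hcoeff k hk
    _ = 2 ^ n * mMeasure p := by
        rw [← Finset.sum_mul, ← Nat.cast_sum, Nat.sum_range_choose]
        norm_num

end MahlerAux

open MahlerAux in
theorem mahler_inequality (m : ℕ) (p : Fin m → Polynomial ℂ) (hp : ∀ k, p k ≠ 0) :
    ∏ k, polyNorm (closedBall (0:ℂ) 1) (p k) ≤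
      2 ^ (∏ k, p k).natDegree * polyNorm (closedBall (0:ℂ) 1) (∏ k, p k) := by
  calc ∏ k, polyNorm D (p k)
      ≤ ∏ k, (2 ^ (p k).natDegree * mMeasure (p k)) :=
        Finset.prod_le_prod (fun k _ => polyNorm_nonneg _) (fun k _ => polyNorm_le_two_pow _)
    _ = (∏ k, (2:ℝ) ^ (p k).natDegree) * ∏ k, mMeasure (p k) := Finset.prod_mul_distrib
    _ = 2 ^ (∑ k, (p k).natDegree) * mMeasure (∏ k, p k) := by
        rw [Finset.prod_pow_eq_pow_sum, mMeasure_prod p hp]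
    _ = 2 ^ (∏ k, p k).natDegree * mMeasure (∏ k, p k) := by
        rw [natDegree_prod _ _ (fun k _ => hp k)]
    _ ≤ 2 ^ (∏ k, p k).natDegree * polyNorm D (∏ k, p k) :=
        mul_le_mul_of_nonneg_left (mMeasure_le_polyNorm _) (by positivity)
end

section
/- Let p_1, …, p_m be nonzero polynomials with complex coefficients, let p = ∏_{k=1}^m p_k, and let n = deg p. If m ≤ n, then ∏_{k=1}^m ‖p_k‖_D ≤ 2^{n−1} ‖p‖_D, where D = {z ∈ ℂ : |z| ≤ 1} is the closed unit disk. -/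
open Polynomial Set Metric

noncomputable def Complex.abs : AbsoluteValue ℂ ℝ := NormedField.toAbsoluteValue ℂ

lemma Complex.norm_eq_abs (z : ℂ) : ‖z‖ = Complex.abs z := rfl

lemma Complex.continuous_abs : Continuous Complex.abs := continuous_norm

@[simp] lemma Complex.abs_conj (z : ℂ) : Complex.abs ((starRingEnd ℂ) z) = Complex.abs z :=
  Complex.norm_conj z

@[simp] lemma Complex.abs_ofReal (x : ℝ) : Complex.abs (x : ℂ) = |x| := Complex.norm_real x

lemma Complex.normSq_eq_abs (z : ℂ) : Complex.normSq z = Complex.abs z ^ 2 :=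
  Complex.normSq_eq_norm_sq z

@[simp] lemma Complex.abs_natCast (n : ℕ) : Complex.abs (n : ℂ) = n := Complex.norm_natCast n

open Finset

namespace KP


instance : Nonempty (closedBall (0:ℂ) 1) := ⟨⟨0, by simp⟩⟩

lemma bdd (p : Polynomial ℂ) :
    BddAbove (Set.range fun z : closedBall (0:ℂ) 1 => Complex.abs (p.eval z)) := by
  obtain ⟨x, hx, hmax⟩ := (isCompact_closedBall (0:ℂ) 1).exists_isMaxOn ⟨0, by simp⟩
    ((Complex.continuous_abs.comp p.continuous_aeval).continuousOn)
  exact ⟨Complex.abs (p.eval x), by rintro r ⟨z, rfl⟩; exact hmax z.2⟩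

lemma eval_le_polyNorm (p : Polynomial ℂ) {z : ℂ} (hz : z ∈ closedBall (0:ℂ) 1) :
    Complex.abs (p.eval z) ≤ polyNorm (closedBall (0:ℂ) 1) p :=
  le_ciSup (bdd p) (⟨z, hz⟩ : closedBall (0:ℂ) 1)

lemma polyNorm_nonneg (p : Polynomial ℂ) : 0 ≤ polyNorm (closedBall (0:ℂ) 1) p :=
  (Complex.abs.nonneg _).trans (eval_le_polyNorm p (z := 0) (by simp))

lemma polyNorm_le (p : Polynomial ℂ) {M : ℝ}
    (hM : ∀ z ∈ closedBall (0:ℂ) 1, Complex.abs (p.eval z) ≤ M) :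
    polyNorm (closedBall (0:ℂ) 1) p ≤ M :=
  ciSup_le fun z => hM z z.2



lemma prod_map_le_prod_map {α : Type*} (s : Multiset α) (f g : α → ℝ)
    (h0 : ∀ a, 0 ≤ f a) (h : ∀ a ∈ s, f a ≤ g a) :
    (s.map f).prod ≤ (s.map g).prod := by
  induction s using Multiset.induction_on with
  | empty => simp
  | cons a s ih =>
    simp only [Multiset.map_cons, Multiset.prod_cons]
    have hf : (0:ℝ) ≤ (s.map f).prod := by
      apply Multiset.prod_nonneg; intro x hx
      obtain ⟨a, _, rfl⟩ := Multiset.mem_map.mp hx; exact h0 a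
    have hga : 0 ≤ g a := (h0 a).trans (h a (Multiset.mem_cons_self a s))
    calc f a * (s.map f).prod ≤ g a * (s.map f).prod :=
          mul_le_mul_of_nonneg_right (h a (Multiset.mem_cons_self a s)) hf
      _ ≤ g a * (s.map g).prod := by
          apply mul_le_mul_of_nonneg_left _ hga
          exact ih fun x hx => h x (Multiset.mem_cons_of_mem hx)

lemma prod_map_nonneg {α : Type*} (s : Multiset α) (f : α → ℝ) (h0 : ∀ a, 0 ≤ f a) :
    0 ≤ (s.map f).prod := by
  apply Multiset.prod_nonneg; intro x hx
  obtain ⟨a, _, rfl⟩ := Multiset.mem_map.mp hx; exact h0 a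

/-- Key combinatorial inequality: `∏ (aᵢ + bᵢ) ≤ 2^(n-1) (∏ aᵢ + ∏ bᵢ)` when `aᵢ ≥ bᵢ ≥ 0`. -/
lemma key_ineq (s : Multiset ℂ) (hs : s ≠ 0) :
    (s.map (fun r => 1 + Complex.abs r)).prod ≤
      2 ^ (Multiset.card s - 1) *
        ((s.map (fun r => max 1 (Complex.abs r))).prod +
          (s.map (fun r => min 1 (Complex.abs r))).prod) := by
  induction s using Multiset.induction_on with
  | empty => exact absurd rfl hs
  | cons a s ih =>
    by_cases h0 : s = 0
    · subst h0
      simp [max_add_min]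
    · have hcard : 1 ≤ Multiset.card s := by
        rwa [Nat.one_le_iff_ne_zero, ne_eq, Multiset.card_eq_zero]
      simp only [Multiset.map_cons, Multiset.prod_cons, Multiset.card_cons]
      have hA : 0 ≤ (s.map (fun r => max 1 (Complex.abs r))).prod :=
        prod_map_nonneg _ _ fun r => le_trans zero_le_one (le_max_left _ _)
      have hB : 0 ≤ (s.map (fun r => min 1 (Complex.abs r))).prod :=
        prod_map_nonneg _ _ fun r => le_min zero_le_one (Complex.abs.nonneg _)
      have hBA : (s.map (fun r => min 1 (Complex.abs r))).prod ≤
          (s.map (fun r => max 1 (Complex.abs r))).prod :=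
        prod_map_le_prod_map _ _ _ (fun r => le_min zero_le_one (Complex.abs.nonneg _))
          (fun r _ => min_le_of_left_le (le_max_left _ _))
      have h1 : (1:ℝ) + Complex.abs a = max 1 (Complex.abs a) + min 1 (Complex.abs a) :=
        (max_add_min _ _).symm
      set A' := (s.map (fun r => max 1 (Complex.abs r))).prod
      set B' := (s.map (fun r => min 1 (Complex.abs r))).prod
      set α := max 1 (Complex.abs a)
      set β := min 1 (Complex.abs a)
      have hβ : 0 ≤ β := le_min zero_le_one (Complex.abs.nonneg _)
      have hαβ : β ≤ α := min_le_of_left_le (le_max_left _ _)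
      have step1 : (1 + Complex.abs a) * (s.map (fun r => 1 + Complex.abs r)).prod ≤
          (α + β) * (2 ^ (Multiset.card s - 1) * (A' + B')) := by
        rw [← h1]
        apply mul_le_mul_of_nonneg_left (ih h0)
        positivity
      refine step1.trans ?_
      have hexp : Multiset.card s + 1 - 1 = (Multiset.card s - 1) + 1 := by omega
      rw [hexp, pow_succ]
      have key : (α + β) * (A' + B') ≤ 2 * (α * A' + β * B') := by nlinarith
      calc (α + β) * (2 ^ (Multiset.card s - 1) * (A' + B'))
          = 2 ^ (Multiset.card s - 1) * ((α + β) * (A' + B')) := by ring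
        _ ≤ 2 ^ (Multiset.card s - 1) * (2 * (α * A' + β * B')) := by
            apply mul_le_mul_of_nonneg_left key; positivity
        _ = 2 ^ (Multiset.card s - 1) * 2 * (α * A' + β * B') := by ring



lemma exists_unit_align (a b : ℂ) :
    ∃ u : ℂ, Complex.abs u = 1 ∧
      Complex.abs a + Complex.abs b = Complex.abs (a + b * u) := by
  by_cases hb : b = 0
  · exact ⟨1, by simp [hb]⟩
  have hbc : b * (starRingEnd ℂ) b = ((Complex.abs b : ℂ)) ^ 2 := by
    rw [Complex.mul_conj, Complex.normSq_eq_abs]; push_cast; ring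
  have habne : (Complex.abs b : ℂ) ≠ 0 := by
    simpa using Complex.abs.ne_zero hb
  by_cases ha : a = 0
  · refine ⟨(starRingEnd ℂ) b / (Complex.abs b : ℂ), ?_, ?_⟩
    · rw [map_div₀, Complex.abs_conj, Complex.abs_ofReal, abs_of_nonneg (Complex.abs.nonneg b),
        div_self (Complex.abs.ne_zero hb)]
    · have h2 : b * ((starRingEnd ℂ) b / (Complex.abs b : ℂ)) = (Complex.abs b : ℂ) := by
        rw [mul_div_assoc', hbc, sq, mul_div_assoc, div_self habne, mul_one]
      rw [h2, ha]
      simp [Complex.abs_ofReal, abs_of_nonneg (Complex.abs.nonneg b)]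
  · have haane : (Complex.abs a : ℂ) ≠ 0 := by
      simpa using Complex.abs.ne_zero ha
    refine ⟨(a * (starRingEnd ℂ) b) / ((Complex.abs a : ℂ) * (Complex.abs b : ℂ)), ?_, ?_⟩
    · rw [map_div₀, map_mul, map_mul, Complex.abs_conj, Complex.abs_ofReal, Complex.abs_ofReal,
        abs_of_nonneg (Complex.abs.nonneg a), abs_of_nonneg (Complex.abs.nonneg b),
        div_self (mul_ne_zero (Complex.abs.ne_zero ha) (Complex.abs.ne_zero hb))]
    · have h2 : a + b * ((a * (starRingEnd ℂ) b) / ((Complex.abs a : ℂ) * (Complex.abs b : ℂ)))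
          = a * (((Complex.abs a + Complex.abs b : ℝ)) / (Complex.abs a : ℂ)) := by
        field_simp
        push_cast
        linear_combination hbc
      rw [h2, map_mul, map_div₀, Complex.abs_ofReal, Complex.abs_ofReal,
        abs_of_nonneg (by positivity), abs_of_nonneg (Complex.abs.nonneg a),
        mul_div_assoc']
      rw [mul_comm, mul_div_assoc, div_self (Complex.abs.ne_zero ha), mul_one]



lemma abs_eq_one_of_pow {z : ℂ} {n : ℕ} (hn : n ≠ 0) (h2 : Complex.abs z ^ n = 1) :
    Complex.abs z = 1 := by
  have hx := Complex.abs.nonneg z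
  exact le_antisymm ((pow_le_one_iff_of_nonneg hx hn).mp h2.le)
    ((one_le_pow_iff_of_nonneg hx hn).mp h2.ge)

lemma sum_eval_roots_of_unity (q : Polynomial ℂ) (n : ℕ) (hn : 1 ≤ n)
    (hdeg : q.natDegree ≤ n) (z : ℂ) :
    ∑ j ∈ range n, q.eval (Complex.exp (2 * Real.pi * Complex.I / n) ^ j * z)
      = n * (q.coeff 0 + q.coeff n * z ^ n) := by
  set ζ := Complex.exp (2 * Real.pi * Complex.I / n) with hζdef
  have hζ : IsPrimitiveRoot ζ n := Complex.isPrimitiveRoot_exp n (by omega)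
  have hev : ∀ x : ℂ, q.eval x = ∑ k ∈ range (n+1), q.coeff k * x ^ k := fun x =>
    eval_eq_sum_range' (lt_of_le_of_lt hdeg (Nat.lt_succ_self n)) x
  have hgeom : ∀ k, 0 < k → k < n → ∑ j ∈ range n, (ζ ^ k) ^ j = 0 := by
    intro k hk0 hkn
    have hne : ζ ^ k ≠ 1 := by
      intro h
      have hd := (hζ.pow_eq_one_iff_dvd k).mp h
      exact absurd (Nat.le_of_dvd hk0 hd) (not_le.mpr hkn)
    rw [geom_sum_eq hne]
    have h1 : (ζ ^ k) ^ n = 1 := by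
      rw [← pow_mul, mul_comm, pow_mul, hζ.pow_eq_one, one_pow]
    simp [h1]
  calc ∑ j ∈ range n, q.eval (ζ ^ j * z)
      = ∑ j ∈ range n, ∑ k ∈ range (n+1), q.coeff k * ((ζ ^ k) ^ j * z ^ k) := by
        refine Finset.sum_congr rfl fun j _ => ?_
        rw [hev]
        refine Finset.sum_congr rfl fun k _ => ?_
        rw [mul_pow, ← pow_mul, mul_comm j k, pow_mul]
    _ = ∑ k ∈ range (n+1), (q.coeff k * z ^ k) * ∑ j ∈ range n, (ζ ^ k) ^ j := by
        rw [Finset.sum_comm]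
        refine Finset.sum_congr rfl fun k _ => ?_
        rw [Finset.mul_sum]
        exact Finset.sum_congr rfl fun j _ => by ring
    _ = n * (q.coeff 0 + q.coeff n * z ^ n) := by
        rw [Finset.sum_range_succ]
        have hlast : (q.coeff n * z ^ n) * ∑ j ∈ range n, (ζ ^ n) ^ j
            = n * (q.coeff n * z ^ n) := by
          rw [hζ.pow_eq_one]
          simp [mul_comm]
        have hrest : ∑ k ∈ range n, (q.coeff k * z ^ k) * ∑ j ∈ range n, (ζ ^ k) ^ j
            = n * q.coeff 0 := by
          rw [Finset.sum_eq_single_of_mem 0 (Finset.mem_range.mpr (by omega))]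
          · simp [mul_comm]
          · intro k hk hk0
            rw [hgeom k (by omega) (Finset.mem_range.mp hk), mul_zero]
        rw [hlast, hrest]
        ring

lemma visser (q : Polynomial ℂ) (n : ℕ) (hn : 1 ≤ n) (hdeg : q.natDegree ≤ n) (M : ℝ)
    (hM : ∀ w : ℂ, Complex.abs w = 1 → Complex.abs (q.eval w) ≤ M) :
    Complex.abs (q.coeff 0) + Complex.abs (q.coeff n) ≤ M := by
  obtain ⟨u, hu1, hu⟩ := exists_unit_align (q.coeff 0) (q.coeff n)
  have hdegX : 0 < (X ^ n - C u : Polynomial ℂ).degree := by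
    rw [degree_X_pow_sub_C (by omega) u]
    exact_mod_cast (by omega : 0 < n)
  obtain ⟨z, hz⟩ := Complex.exists_root hdegX
  have hzn : z ^ n = u := by
    have h := hz
    simp only [IsRoot, eval_sub, eval_pow, eval_X, eval_C] at h
    exact sub_eq_zero.mp h
  have hza : Complex.abs z = 1 := by
    apply abs_eq_one_of_pow (n := n) (by omega)
    rw [← map_pow, hzn, hu1]
  set ζ := Complex.exp (2 * Real.pi * Complex.I / n) with hζdef
  have hζ : IsPrimitiveRoot ζ n := Complex.isPrimitiveRoot_exp n (by omega)
  have hζa : Complex.abs ζ = 1 := by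
    apply abs_eq_one_of_pow (n := n) (by omega)
    rw [← map_pow, hζ.pow_eq_one, map_one]
  have hsum := sum_eval_roots_of_unity q n hn hdeg z
  have hval : (n : ℝ) * (Complex.abs (q.coeff 0) + Complex.abs (q.coeff n))
      = Complex.abs (∑ j ∈ range n, q.eval (ζ ^ j * z)) := by
    rw [hsum, map_mul, hzn, ← hu]
    simp
  have hbound : Complex.abs (∑ j ∈ range n, q.eval (ζ ^ j * z)) ≤ (n : ℝ) * M := by
    refine le_trans (Complex.abs.sum_le _ _) ?_
    have : ∀ j ∈ range n, Complex.abs (q.eval (ζ ^ j * z)) ≤ M := by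
      intro j _
      apply hM
      rw [map_mul, map_pow, hζa, hza, one_pow, one_mul]
    calc ∑ j ∈ range n, Complex.abs (q.eval (ζ ^ j * z)) ≤ ∑ _j ∈ range n, M :=
          Finset.sum_le_sum this
      _ = n * M := by rw [Finset.sum_const, card_range, nsmul_eq_mul]
  have hn' : (0:ℝ) < n := by exact_mod_cast (by omega : 0 < n)
  have := hval.le.trans hbound
  exact le_of_mul_le_mul_left this hn'



lemma abs_multiset_prod (s : Multiset ℂ) :
    Complex.abs s.prod = (s.map Complex.abs).prod := by
  induction s using Multiset.induction_on with
  | empty => simp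
  | cons a s ih => simp [ih]

noncomputable def refl (r : ℂ) : Polynomial ℂ :=
  if 1 ≤ Complex.abs r then X - C r else C ((starRingEnd ℂ) r) * X - 1

lemma refl_natDegree_le (r : ℂ) : (refl r).natDegree ≤ 1 := by
  unfold refl; split
  · exact (natDegree_X_sub_C r).le
  · refine (natDegree_sub_le _ _).trans (max_le ?_ (by simp))
    exact (natDegree_C_mul_le _ _).trans natDegree_X.le

lemma refl_coeff_one (r : ℂ) :
    Complex.abs ((refl r).coeff 1) = min 1 (Complex.abs r) := by
  unfold refl; split
  · next h =>
    simp only [coeff_sub, coeff_X_one, coeff_C]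
    rw [min_eq_left h]; norm_num
  · next h =>
    simp only [coeff_sub, coeff_C_mul, coeff_X_one, coeff_one]
    rw [min_eq_right (le_of_not_ge h)]
    norm_num [Complex.abs_conj]

lemma refl_eval_zero (r : ℂ) :
    Complex.abs ((refl r).eval 0) = max 1 (Complex.abs r) := by
  unfold refl; split
  · next h => simp [max_eq_right h]
  · next h => simp [max_eq_left (le_of_not_ge h)]

lemma refl_eval_circle (r w : ℂ) (hw : Complex.abs w = 1) :
    Complex.abs ((refl r).eval w) = Complex.abs (w - r) := by
  unfold refl; split
  · simp
  · simp only [eval_sub, eval_mul, eval_C, eval_X, eval_one]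
    have hww : w * (starRingEnd ℂ) w = 1 := by
      rw [Complex.mul_conj, Complex.normSq_eq_abs, hw]; norm_num
    have h2 : (starRingEnd ℂ) r * w - 1 = w * (starRingEnd ℂ) (r - w) := by
      rw [map_sub, mul_sub, hww]; ring
    rw [h2, map_mul, hw, Complex.abs_conj, one_mul, Complex.abs.map_sub]

lemma coeff_card_multiset_prod (s : Multiset (Polynomial ℂ))
    (h : ∀ q ∈ s, natDegree q ≤ 1) :
    s.prod.natDegree ≤ Multiset.card s ∧
      s.prod.coeff (Multiset.card s) = (s.map (fun q => q.coeff 1)).prod := by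
  induction s using Multiset.induction_on with
  | empty => simp
  | cons a s ih =>
    have ha := h a (Multiset.mem_cons_self a s)
    obtain ⟨ih1, ih2⟩ := ih (fun q hq => h q (Multiset.mem_cons_of_mem hq))
    constructor
    · simp only [Multiset.prod_cons, Multiset.card_cons]
      exact natDegree_mul_le.trans (by omega)
    · simp only [Multiset.prod_cons, Multiset.card_cons, Multiset.map_cons]
      rw [show Multiset.card s + 1 = 1 + Multiset.card s from by omega,
        coeff_mul_add_eq_of_natDegree_le ha ih1, ih2]


end KP

set_option maxHeartbeats 2000000 in
theorem kroo_pritsker_inequality (m : ℕ) (p : Fin m → Polynomial ℂ)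
    (hp : ∀ k, p k ≠ 0) (hm : m ≤ (∏ k, p k).natDegree) :
    ∏ k, polyNorm (closedBall (0:ℂ) 1) (p k) ≤
      2 ^ ((∏ k, p k).natDegree - 1) * polyNorm (closedBall (0:ℂ) 1) (∏ k, p k) := by
  classical
  set D : Set ℂ := closedBall (0:ℂ) 1 with hD
  set P : Polynomial ℂ := ∏ k, p k with hPdef
  have hP : P ≠ 0 := Finset.prod_ne_zero_iff.mpr (fun k _ => hp k)
  set n : ℕ := P.natDegree with hndef
  have hpoly1 : polyNorm D (1 : Polynomial ℂ) = 1 := by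
    unfold polyNorm
    simp only [eval_one, map_one, norm_one]
    exact ciSup_const
  by_cases hn0 : n = 0
  · have hm0 : m = 0 := by omega
    subst hm0
    have hP1 : P = 1 := by rw [hPdef]; simp
    rw [hn0, hP1, hpoly1]
    simp
  have hn1 : 1 ≤ n := by omega
  set R : Multiset ℂ := P.roots with hRdef
  have hcard : Multiset.card R = n := by
    rw [hndef, (IsAlgClosed.splits P).natDegree_eq_card_roots]
  set c : ℂ := P.leadingCoeff with hcdef
  -- Step 1: per-factor bound
  have step1 : ∀ k, polyNorm D (p k) ≤
      Complex.abs (p k).leadingCoeff *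
        ((p k).roots.map (fun r => 1 + Complex.abs r)).prod := by
    intro k
    apply KP.polyNorm_le
    intro z hz
    have hz1 : Complex.abs z ≤ 1 := by
      rw [mem_closedBall, dist_zero_right, Complex.norm_eq_abs] at hz
      exact hz
    conv_lhs => rw [(IsAlgClosed.splits (p k)).eq_prod_roots]
    rw [eval_mul, eval_C, map_mul, eval_multiset_prod, Multiset.map_map,
      KP.abs_multiset_prod, Multiset.map_map]
    apply mul_le_mul_of_nonneg_left _ (Complex.abs.nonneg _)
    apply KP.prod_map_le_prod_map _ _ _ (fun r => Complex.abs.nonneg _)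
    intro r _
    show Complex.abs ((X - C r).eval z) ≤ 1 + Complex.abs r
    rw [eval_sub, eval_X, eval_C]
    calc Complex.abs (z - r) ≤ Complex.abs z + Complex.abs r := Complex.abs.sub_le_add z r
      _ ≤ 1 + Complex.abs r := by linarith
  -- Step 2: combine over k
  have hRbind : R = Finset.univ.val.bind (fun k => (p k).roots) := by
    rw [hRdef, hPdef, roots_prod p Finset.univ hP]
  have step2 : ∏ k, polyNorm D (p k) ≤
      Complex.abs c * (R.map (fun r => 1 + Complex.abs r)).prod := by
    calc ∏ k, polyNorm D (p k)
        ≤ ∏ k, (Complex.abs (p k).leadingCoeff *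
            ((p k).roots.map (fun r => 1 + Complex.abs r)).prod) :=
          Finset.prod_le_prod (fun k _ => KP.polyNorm_nonneg _) (fun k _ => step1 k)
      _ = Complex.abs c * (R.map (fun r => 1 + Complex.abs r)).prod := by
          rw [Finset.prod_mul_distrib]
          congr 1
          · rw [hcdef, hPdef, leadingCoeff_prod, map_prod]
          · rw [hRbind, Multiset.map_bind, Multiset.prod_bind, Finset.prod_eq_multiset_prod]
  -- Step 3: key inequality
  have hRne : R ≠ 0 := by
    intro h
    rw [h] at hcard
    simp at hcard
    omega
  have step3 := KP.key_ineq R hRne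
  rw [hcard] at step3
  -- Step 4: the reflected polynomial
  set q : Polynomial ℂ := C c * (R.map KP.refl).prod with hqdef
  have hdegs : ∀ f ∈ R.map KP.refl, natDegree f ≤ 1 := by
    intro f hf
    obtain ⟨r, _, rfl⟩ := Multiset.mem_map.mp hf
    exact KP.refl_natDegree_le r
  obtain ⟨hqd1, hqc⟩ := KP.coeff_card_multiset_prod (R.map KP.refl) hdegs
  rw [Multiset.card_map, hcard] at hqd1 hqc
  have hqdeg : q.natDegree ≤ n :=
    (natDegree_C_mul_le _ _).trans hqd1
  have hq0 : Complex.abs (q.coeff 0)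
      = Complex.abs c * (R.map (fun r => max 1 (Complex.abs r))).prod := by
    rw [coeff_zero_eq_eval_zero, hqdef, eval_mul, eval_C, map_mul, eval_multiset_prod,
      Multiset.map_map, KP.abs_multiset_prod, Multiset.map_map]
    congr 1
    exact congrArg Multiset.prod (Multiset.map_congr rfl (fun r _ => KP.refl_eval_zero r))
  have hqn : Complex.abs (q.coeff n)
      = Complex.abs c * (R.map (fun r => min 1 (Complex.abs r))).prod := by
    rw [hqdef, coeff_C_mul, hqc, map_mul, Multiset.map_map, KP.abs_multiset_prod,
      Multiset.map_map]
    congr 1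
    exact congrArg Multiset.prod (Multiset.map_congr rfl (fun r _ => KP.refl_coeff_one r))
  have hqM : ∀ w : ℂ, Complex.abs w = 1 → Complex.abs (q.eval w) ≤ polyNorm D P := by
    intro w hw
    have hweq : Complex.abs (q.eval w) = Complex.abs (P.eval w) := by
      conv_rhs => rw [(IsAlgClosed.splits P).eq_prod_roots]
      rw [hqdef, eval_mul, eval_C, map_mul, eval_multiset_prod, Multiset.map_map,
        KP.abs_multiset_prod, Multiset.map_map,
        eval_mul, eval_C, map_mul, eval_multiset_prod, Multiset.map_map,
        KP.abs_multiset_prod, Multiset.map_map]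
      congr 1
      apply congrArg Multiset.prod
      apply Multiset.map_congr rfl
      intro r _
      simp only [Function.comp_apply, eval_sub, eval_X, eval_C]
      exact KP.refl_eval_circle r w hw
    rw [hweq]
    apply KP.eval_le_polyNorm
    rw [mem_closedBall, dist_zero_right, Complex.norm_eq_abs, hw]
  -- Step 5: Visser
  have step5 := KP.visser q n hn1 hqdeg (polyNorm D P) hqM
  rw [hq0, hqn] at step5
  -- Combine
  calc ∏ k, polyNorm D (p k)
      ≤ Complex.abs c * (R.map (fun r => 1 + Complex.abs r)).prod := step2
    _ ≤ Complex.abs c * (2 ^ (n - 1) *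
          ((R.map (fun r => max 1 (Complex.abs r))).prod +
            (R.map (fun r => min 1 (Complex.abs r))).prod)) :=
        mul_le_mul_of_nonneg_left step3 (Complex.abs.nonneg _)
    _ = 2 ^ (n - 1) *
          (Complex.abs c * (R.map (fun r => max 1 (Complex.abs r))).prod +
            Complex.abs c * (R.map (fun r => min 1 (Complex.abs r))).prod) := by ring
    _ ≤ 2 ^ (n - 1) * polyNorm D P := by
        apply mul_le_mul_of_nonneg_left step5
        positivity
end

section
/- The limit lim_{n→∞} (1/n) · log( 2^{n−1} · ∏_{k=1}^{⌊n/2⌋} (1 + cos((2k−1)π/(2n)))² ) exists and equals log 2 + (2/π) ∫_0^{π/2} log(1 + sin t) dt; equivalently, the n-th root of Borwein's constant 2^{n−1} ∏_{k=1}^{⌊n/2⌋} (1 + cos((2k−1)π/(2n)))² converges to 2·exp((2/π) ∫_0^{π/2} log(1 + sin t) dt) ≈ 3.2099123 as n → ∞. -/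
open Filter

open Real Set MeasureTheory intervalIntegral Topology

noncomputable section BorweinAux

private lemma bw_sqrt2_lt_two : Real.sqrt 2 < 2 := by
  nlinarith [Real.sq_sqrt (by norm_num : (0:ℝ) ≤ 2), Real.sqrt_nonneg 2]

private lemma bw_cos_pos {t : ℝ} (ht : t ∈ Icc 0 (3 * π / 4)) : 0 < 1 + Real.cos t := by
  have h1 : Real.cos (3 * π / 4) ≤ Real.cos t := by
    apply Real.cos_le_cos_of_nonneg_of_le_pi ht.1
    · nlinarith [Real.pi_pos]
    · exact ht.2
  have h2 : Real.cos (3 * π / 4) = -(Real.sqrt 2 / 2) := by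
    have : (3 : ℝ) * π / 4 = π - π / 4 := by ring
    rw [this, Real.cos_pi_sub, Real.cos_pi_div_four]
  nlinarith [bw_sqrt2_lt_two]

private lemma bw_anti : AntitoneOn (fun t => Real.log (1 + Real.cos t)) (Icc 0 (3 * π / 4)) := by
  intro s hs t ht hst
  have h1 : Real.cos t ≤ Real.cos s :=
    Real.cos_le_cos_of_nonneg_of_le_pi hs.1 (by nlinarith [ht.2, Real.pi_pos]) hst
  exact Real.log_le_log (bw_cos_pos ht) (by linarith)

end BorweinAux

noncomputable section BorweinAux2

/-- clamped integrand -/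
private def bwfc (t : ℝ) : ℝ := Real.log (1 + Real.cos (max 0 (min t (3 * π / 4))))

private lemma bw_clamp_mem (t : ℝ) : max 0 (min t (3 * π / 4)) ∈ Icc 0 (3 * π / 4) := by
  constructor
  · exact le_max_left _ _
  · have h : (0:ℝ) ≤ 3 * π / 4 := by positivity
    exact max_le h (min_le_right _ _)

private lemma bwfc_cont : Continuous bwfc := by
  apply Continuous.log
  · exact continuous_const.add (Real.continuous_cos.comp
      (continuous_const.max (continuous_id.min continuous_const)))
  · intro x
    exact ne_of_gt (bw_cos_pos (bw_clamp_mem x))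

private lemma bwfc_eq {t : ℝ} (ht : t ∈ Icc 0 (3 * π / 4)) :
    bwfc t = Real.log (1 + Real.cos t) := by
  unfold bwfc
  rw [min_eq_left ht.2, max_eq_right ht.1]

/-- primitive -/
private def bwF (x : ℝ) : ℝ := ∫ t in (0:ℝ)..x, bwfc t

private lemma bwF_cont : Continuous bwF :=
  intervalIntegral.continuous_primitive (fun a b => (bwfc_cont.intervalIntegrable a b)) 0

private lemma bwF_sub {a b : ℝ} (ha : a ∈ Icc (0:ℝ) (3 * π / 4)) (hb : b ∈ Icc (0:ℝ) (3 * π / 4)) :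
    (∫ t in a..b, Real.log (1 + Real.cos t)) = bwF b - bwF a := by
  have h1 : (∫ t in a..b, Real.log (1 + Real.cos t)) = ∫ t in a..b, bwfc t := by
    apply intervalIntegral.integral_congr
    intro x hx
    have hx' : x ∈ Icc 0 (3 * π / 4) := by
      rcases le_total a b with h | h
      · rw [uIcc_of_le h] at hx
        exact ⟨le_trans ha.1 hx.1, le_trans hx.2 hb.2⟩
      · rw [uIcc_of_ge h] at hx
        exact ⟨le_trans hb.1 hx.1, le_trans hx.2 ha.2⟩
    exact (bwfc_eq hx').symm
  rw [h1]
  rw [← intervalIntegral.integral_interval_sub_left (bwfc_cont.intervalIntegrable 0 b)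
        (bwfc_cont.intervalIntegrable 0 a)]
  rfl

end BorweinAux2

noncomputable section BorweinAux3

private lemma bw_mem {n : ℕ} (hn : 2 ≤ n) {u : ℝ} (hu0 : 0 ≤ u) (hum : u ≤ ((n/2 : ℕ) : ℝ)) :
    π/n * u + π/(2*n) ∈ Icc (0:ℝ) (3*π/4) := by
  have hnR : (2:ℝ) ≤ n := by exact_mod_cast hn
  have hπ := Real.pi_pos
  have h2m : ((n/2 : ℕ) : ℝ) * 2 ≤ n := by exact_mod_cast Nat.div_mul_le_self n 2
  constructor
  · have : 0 ≤ π/n * u := by positivity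
    have : 0 < π/(2*n) := by positivity
    linarith
  · have h1 : π/n * u ≤ π/n * ((n/2:ℕ):ℝ) := by
      apply mul_le_mul_of_nonneg_left hum (by positivity)
    have h2 : π/n * ((n/2:ℕ):ℝ) + π/(2*n) ≤ 3*π/4 := by
      rw [div_mul_eq_mul_div, div_add_div _ _ (by linarith : (n:ℝ) ≠ 0) (by linarith : 2*(n:ℝ) ≠ 0)]
      rw [div_le_div_iff₀ (by positivity) (by norm_num)]
      ring_nf
      have hn0 : (0:ℝ) ≤ π * n := by positivity
      nlinarith [mul_le_mul_of_nonneg_left h2m hn0, mul_le_mul_of_nonneg_left hnR hn0]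
    linarith

private lemma bw_g_anti {n : ℕ} (hn : 2 ≤ n) :
    AntitoneOn (fun u : ℝ => Real.log (1 + Real.cos (π/n * u + π/(2*n))))
      (Icc (0:ℝ) ((n/2 : ℕ) : ℝ)) := by
  intro u hu v hv huv
  have hπn : (0:ℝ) < π/n := by
    have : (0:ℝ) < n := by exact_mod_cast Nat.lt_of_lt_of_le (by norm_num) hn
    positivity
  exact bw_anti (bw_mem hn hu.1 hu.2) (bw_mem hn hv.1 hv.2)
    (add_le_add_left (mul_le_mul_of_nonneg_left huv hπn.le) _)

private lemma bw_lower {n : ℕ} (hn : 2 ≤ n) :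
    bwF (π/n * ((n/2 : ℕ) : ℝ) + π/(2*n)) - bwF (π/(2*n)) ≤
      (π/n) * ∑ k ∈ Finset.range (n/2),
        Real.log (1 + Real.cos (π/n * (k:ℝ) + π/(2*n))) := by
  have hπn : (0:ℝ) < π/n := by
    have : (0:ℝ) < n := by exact_mod_cast Nat.lt_of_lt_of_le (by norm_num) hn
    positivity
  have hanti : AntitoneOn (fun u : ℝ => Real.log (1 + Real.cos (π/n * u + π/(2*n))))
      (Icc (0:ℝ) (0 + ((n/2 : ℕ) : ℝ))) := by simpa using bw_g_anti hn
  have h1 := hanti.integral_le_sum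
  simp only [zero_add] at h1
  have h2 : (∫ x in (0:ℝ)..((n/2:ℕ):ℝ), Real.log (1 + Real.cos (π/n * x + π/(2*n))))
      = (π/n)⁻¹ • ∫ t in (π/n * 0 + π/(2*n))..(π/n * ((n/2:ℕ):ℝ) + π/(2*n)),
          Real.log (1 + Real.cos t) :=
    intervalIntegral.integral_comp_mul_add (fun t => Real.log (1 + Real.cos t)) hπn.ne' _
  rw [h2] at h1
  have h3 : (∫ t in (π/n * 0 + π/(2*n))..(π/n * ((n/2:ℕ):ℝ) + π/(2*n)),
      Real.log (1 + Real.cos t)) =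
      bwF (π/n * ((n/2:ℕ):ℝ) + π/(2*n)) - bwF (π/n * 0 + π/(2*n)) :=
    bwF_sub (bw_mem hn le_rfl (Nat.cast_nonneg _)) (bw_mem hn (Nat.cast_nonneg _) le_rfl)
  rw [h3] at h1
  have h4 := mul_le_mul_of_nonneg_left h1 hπn.le
  rw [smul_eq_mul, ← mul_assoc, mul_inv_cancel₀ hπn.ne', one_mul] at h4
  simpa using h4

private lemma bw_upper {n : ℕ} (hn : 2 ≤ n) :
    (π/n) * ∑ k ∈ Finset.range (n/2),
        Real.log (1 + Real.cos (π/n * (k:ℝ) + π/(2*n))) ≤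
      π/n * Real.log 2 +
        (bwF (π/n * ((n/2 - 1 : ℕ) : ℝ) + π/(2*n)) - bwF (π/(2*n))) := by
  have hπn : (0:ℝ) < π/n := by
    have : (0:ℝ) < n := by exact_mod_cast Nat.lt_of_lt_of_le (by norm_num) hn
    positivity
  have hm1 : 1 ≤ n / 2 := Nat.one_le_div_iff (by norm_num) |>.2 hn
  have hmsub : ((n/2 - 1 : ℕ) : ℝ) ≤ ((n/2 : ℕ) : ℝ) := by
    exact_mod_cast Nat.sub_le _ _
  -- split off the first term
  have hsplit : (∑ k ∈ Finset.range (n/2),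
      Real.log (1 + Real.cos (π/n * (k:ℝ) + π/(2*n)))) =
      (∑ k ∈ Finset.range (n/2 - 1),
        Real.log (1 + Real.cos (π/n * ((k+1 : ℕ):ℝ) + π/(2*n)))) +
      Real.log (1 + Real.cos (π/n * ((0:ℕ):ℝ) + π/(2*n))) := by
    rw [show n/2 = (n/2 - 1) + 1 from (Nat.succ_pred_eq_of_pos (by omega)).symm,
      Finset.sum_range_succ']
    simp
  have hanti : AntitoneOn (fun u : ℝ => Real.log (1 + Real.cos (π/n * u + π/(2*n))))
      (Icc (0:ℝ) (0 + ((n/2 - 1 : ℕ) : ℝ))) := by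
    apply (bw_g_anti hn).mono
    apply Icc_subset_Icc le_rfl
    simpa using hmsub
  have h1 := hanti.sum_le_integral
  simp only [zero_add] at h1
  have h2 : (∫ x in (0:ℝ)..((n/2 - 1:ℕ):ℝ), Real.log (1 + Real.cos (π/n * x + π/(2*n))))
      = (π/n)⁻¹ • ∫ t in (π/n * 0 + π/(2*n))..(π/n * ((n/2 - 1:ℕ):ℝ) + π/(2*n)),
          Real.log (1 + Real.cos t) :=
    intervalIntegral.integral_comp_mul_add (fun t => Real.log (1 + Real.cos t)) hπn.ne' _
  rw [h2] at h1
  have h3 : (∫ t in (π/n * 0 + π/(2*n))..(π/n * ((n/2 - 1:ℕ):ℝ) + π/(2*n)),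
      Real.log (1 + Real.cos t)) =
      bwF (π/n * ((n/2 - 1:ℕ):ℝ) + π/(2*n)) - bwF (π/n * 0 + π/(2*n)) :=
    bwF_sub (bw_mem hn le_rfl (Nat.cast_nonneg _))
      (bw_mem hn (Nat.cast_nonneg _) hmsub)
  rw [h3] at h1
  -- first term ≤ log 2
  have hg0 : Real.log (1 + Real.cos (π/n * ((0:ℕ):ℝ) + π/(2*n))) ≤ Real.log 2 := by
    push_cast
    apply Real.log_le_log (bw_cos_pos (bw_mem hn le_rfl (Nat.cast_nonneg _)))
    have := Real.cos_le_one (π/n * ((0:ℕ):ℝ) + π/(2*n))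
    linarith
  have h4 := mul_le_mul_of_nonneg_left h1 hπn.le
  rw [smul_eq_mul, ← mul_assoc, mul_inv_cancel₀ hπn.ne', one_mul] at h4
  rw [hsplit, mul_add]
  have h5 := mul_le_mul_of_nonneg_left hg0 hπn.le
  simp only [Nat.cast_zero, mul_zero, zero_add] at h4 h5 ⊢
  linarith

private lemma bw_tendsto_a : Tendsto (fun n : ℕ => π/(2*(n:ℝ))) atTop (𝓝 0) := by
  have h := tendsto_one_div_atTop_nhds_zero_nat.const_mul (π/2)
  rw [mul_zero] at h
  convert h using 2 with n
  rw [mul_one_div, div_div]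

private lemma bw_tendsto_b :
    Tendsto (fun n : ℕ => π/(n:ℝ) * ((n/2 : ℕ) : ℝ) + π/(2*(n:ℝ))) atTop (𝓝 (π/2)) := by
  have hπ := Real.pi_pos
  apply tendsto_of_tendsto_of_tendsto_of_le_of_le' (g := fun _ : ℕ => π/2)
    (h := fun n : ℕ => π/2 + π/(2*(n:ℝ)))
  · exact tendsto_const_nhds
  · simpa using tendsto_const_nhds.add bw_tendsto_a
  · filter_upwards [eventually_ge_atTop 2] with n hn
    have hnR : (2:ℝ) ≤ n := by exact_mod_cast hn
    have h2m : (n:ℝ) - 1 ≤ ((n/2 : ℕ) : ℝ) * 2 := by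
      have : n - 1 ≤ n/2 * 2 := by omega
      calc (n:ℝ) - 1 ≤ ((n - 1 : ℕ) : ℝ) := by
            push_cast [Nat.cast_sub (by omega : 1 ≤ n)]; ring_nf; simp
        _ ≤ _ := by exact_mod_cast this
    rw [div_mul_eq_mul_div, div_add_div _ _ (by linarith : (n:ℝ) ≠ 0)
      (by linarith : 2*(n:ℝ) ≠ 0), le_div_iff₀ (by positivity)]
    nlinarith [mul_le_mul_of_nonneg_left h2m hπ.le]
  · filter_upwards [eventually_ge_atTop 2] with n hn
    have hnR : (2:ℝ) ≤ n := by exact_mod_cast hn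
    have h2m : ((n/2 : ℕ) : ℝ) * 2 ≤ n := by exact_mod_cast Nat.div_mul_le_self n 2
    have key : π/(n:ℝ) * ((n/2 : ℕ) : ℝ) ≤ π/2 := by
      rw [div_mul_eq_mul_div, div_le_div_iff₀ (by linarith) (by norm_num)]
      nlinarith [mul_le_mul_of_nonneg_left h2m hπ.le]
    linarith

private lemma bw_tendsto_c :
    Tendsto (fun n : ℕ => π/(n:ℝ) * ((n/2 - 1 : ℕ) : ℝ) + π/(2*(n:ℝ))) atTop (𝓝 (π/2)) := by
  have hπ := Real.pi_pos
  apply tendsto_of_tendsto_of_tendsto_of_le_of_le'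
    (g := fun n : ℕ => π/2 - π/(n:ℝ)) (h := fun n : ℕ => π/2 + π/(2*(n:ℝ)))
  · have hπn : Tendsto (fun n : ℕ => π/(n:ℝ)) atTop (𝓝 0) := by
      have h := tendsto_one_div_atTop_nhds_zero_nat.const_mul π
      rw [mul_zero] at h
      convert h using 2 with n
      rw [mul_one_div]
    simpa using tendsto_const_nhds.sub hπn
  · simpa using tendsto_const_nhds.add bw_tendsto_a
  · filter_upwards [eventually_ge_atTop 2] with n hn
    have hnR : (2:ℝ) ≤ n := by exact_mod_cast hn
    have hn0 : (0:ℝ) < n := by linarith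
    have hcast : ((n/2 - 1 : ℕ) : ℝ) = ((n/2 : ℕ) : ℝ) - 1 := by
      have : 1 ≤ n/2 := Nat.one_le_div_iff (by norm_num) |>.2 hn
      push_cast [Nat.cast_sub this]
      ring
    have h2m : (n:ℝ) - 1 ≤ ((n/2 : ℕ) : ℝ) * 2 := by
      have h' : n - 1 ≤ n/2 * 2 := by omega
      calc (n:ℝ) - 1 ≤ ((n - 1 : ℕ) : ℝ) := by
            push_cast [Nat.cast_sub (by omega : 1 ≤ n)]; ring_nf; simp
        _ ≤ _ := by exact_mod_cast h'
    rw [hcast,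
      show π/2 - π/(n:ℝ) = (π*(n:ℝ) - 2*π)/(2*(n:ℝ)) by field_simp,
      show π/(n:ℝ) * (((n/2:ℕ):ℝ)-1) + π/(2*(n:ℝ))
          = (π*(2*(((n/2:ℕ):ℝ)-1)+1))/(2*(n:ℝ)) by field_simp,
      div_le_div_iff₀ (by positivity) (by positivity)]
    nlinarith [mul_le_mul_of_nonneg_left h2m (by positivity : (0:ℝ) ≤ π * (2*(n:ℝ)))]
  · filter_upwards [eventually_ge_atTop 2] with n hn
    have hnR : (2:ℝ) ≤ n := by exact_mod_cast hn
    have hn0 : (0:ℝ) < n := by linarith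
    have hcast : ((n/2 - 1 : ℕ) : ℝ) ≤ ((n/2 : ℕ) : ℝ) := by
      exact_mod_cast Nat.sub_le _ _
    have h2m : ((n/2 : ℕ) : ℝ) * 2 ≤ n := by exact_mod_cast Nat.div_mul_le_self n 2
    have key : π/(n:ℝ) * ((n/2 - 1 : ℕ) : ℝ) ≤ π/2 := by
      have : π/(n:ℝ) * ((n/2 - 1 : ℕ) : ℝ) ≤ π/(n:ℝ) * ((n/2 : ℕ) : ℝ) :=
        mul_le_mul_of_nonneg_left hcast (by positivity)
      refine le_trans this ?_
      rw [div_mul_eq_mul_div, div_le_div_iff₀ (by linarith) (by norm_num)]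
      nlinarith [mul_le_mul_of_nonneg_left h2m hπ.le]
    linarith

private lemma bw_key :
    Tendsto (fun n : ℕ => (π/(n:ℝ)) * ∑ k ∈ Finset.range (n/2),
        Real.log (1 + Real.cos (π/(n:ℝ) * (k:ℝ) + π/(2*(n:ℝ)))))
      atTop (𝓝 (∫ t in (0:ℝ)..(π/2), Real.log (1 + Real.cos t))) := by
  have hπ := Real.pi_pos
  have hI : (∫ t in (0:ℝ)..(π/2), Real.log (1 + Real.cos t)) = bwF (π/2) - bwF 0 :=
    bwF_sub ⟨le_rfl, by positivity⟩ ⟨by positivity, by linarith⟩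
  rw [hI]
  have hπn0 : Tendsto (fun n : ℕ => π/(n:ℝ) * Real.log 2) atTop (𝓝 0) := by
    have h := tendsto_one_div_atTop_nhds_zero_nat.const_mul (π * Real.log 2)
    rw [mul_zero] at h
    convert h using 2 with n
    rw [mul_one_div]
    ring
  have hL : Tendsto (fun n : ℕ =>
      bwF (π/(n:ℝ) * ((n/2 : ℕ) : ℝ) + π/(2*(n:ℝ))) - bwF (π/(2*(n:ℝ))))
      atTop (𝓝 (bwF (π/2) - bwF 0)) :=
    ((bwF_cont.tendsto _).comp bw_tendsto_b).sub ((bwF_cont.tendsto _).comp bw_tendsto_a)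
  have hU : Tendsto (fun n : ℕ => π/(n:ℝ) * Real.log 2 +
      (bwF (π/(n:ℝ) * ((n/2 - 1 : ℕ) : ℝ) + π/(2*(n:ℝ))) - bwF (π/(2*(n:ℝ)))))
      atTop (𝓝 (bwF (π/2) - bwF 0)) := by
    have := hπn0.add
      (((bwF_cont.tendsto _).comp bw_tendsto_c).sub ((bwF_cont.tendsto _).comp bw_tendsto_a))
    simpa using this
  apply tendsto_of_tendsto_of_tendsto_of_le_of_le' hL hU
  · filter_upwards [eventually_ge_atTop 2] with n hn
    exact bw_lower hn
  · filter_upwards [eventually_ge_atTop 2] with n hn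
    exact bw_upper hn

theorem borwein_constant_asymptotics :
    Tendsto (fun n : ℕ => (1 / (n : ℝ)) *
        Real.log ((2 : ℝ) ^ (n - 1) *
          ∏ k ∈ Finset.range (n / 2),
            (1 + Real.cos ((2 * (k : ℝ) + 1) * Real.pi / (2 * n))) ^ 2))
      atTop
      (nhds (Real.log 2 +
        (2 / Real.pi) * ∫ t in (0:ℝ)..(Real.pi / 2), Real.log (1 + Real.sin t))) := by
  have hπ := Real.pi_pos
  have hsin : (∫ t in (0:ℝ)..(π/2), Real.log (1 + Real.sin t))
      = ∫ t in (0:ℝ)..(π/2), Real.log (1 + Real.cos t) := by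
    have h := intervalIntegral.integral_comp_sub_left (a := 0) (b := π/2)
      (fun t => Real.log (1 + Real.sin t)) (π/2)
    simp only [sub_self, sub_zero] at h
    rw [← h]
    apply intervalIntegral.integral_congr
    intro x hx
    simp [Real.sin_pi_div_two_sub]
  have htend : Tendsto (fun n : ℕ => ((n-1:ℕ):ℝ)/(n:ℝ) * Real.log 2 +
      (2/π) * ((π/(n:ℝ)) * ∑ k ∈ Finset.range (n/2),
        Real.log (1 + Real.cos (π/(n:ℝ) * (k:ℝ) + π/(2*(n:ℝ))))))
      atTop (𝓝 (Real.log 2 + (2/π) * ∫ t in (0:ℝ)..(π/2), Real.log (1 + Real.cos t))) := by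
    apply Tendsto.add
    · have h1 : Tendsto (fun n : ℕ => ((n-1:ℕ):ℝ)/(n:ℝ)) atTop (𝓝 1) := by
        have heq : ∀ᶠ n : ℕ in atTop, 1 - 1/(n:ℝ) = ((n-1:ℕ):ℝ)/(n:ℝ) := by
          filter_upwards [eventually_ge_atTop 1] with n hn
          have hn0 : (n:ℝ) ≠ 0 := by
            have : (1:ℝ) ≤ n := by exact_mod_cast hn
            linarith
          rw [Nat.cast_sub hn, sub_div, div_self hn0]
          push_cast
          ring
        apply Tendsto.congr' heq
        have := tendsto_const_nhds (x := (1:ℝ)) (f := atTop (α := ℕ)) |>.sub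
          tendsto_one_div_atTop_nhds_zero_nat
        simpa using this
      have := h1.mul_const (Real.log 2)
      simpa using this
    · exact bw_key.const_mul (2/π)
  rw [show Real.log 2 + (2/Real.pi) * ∫ t in (0:ℝ)..(Real.pi/2), Real.log (1 + Real.sin t)
      = Real.log 2 + (2/π) * ∫ t in (0:ℝ)..(π/2), Real.log (1 + Real.cos t) by rw [hsin]]
  apply htend.congr'
  filter_upwards [eventually_ge_atTop 2] with n hn
  have hn0 : (n:ℝ) ≠ 0 := by
    have : (2:ℝ) ≤ n := by exact_mod_cast hn
    linarith
  have harg : ∀ k : ℕ, (2*(k:ℝ)+1) * π / (2*(n:ℝ)) = π/(n:ℝ) * (k:ℝ) + π/(2*(n:ℝ)) := by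
    intro k
    field_simp
  have hposk : ∀ k ∈ Finset.range (n/2),
      (0:ℝ) < 1 + Real.cos ((2*(k:ℝ)+1) * π / (2*(n:ℝ))) := by
    intro k hk
    rw [harg k]
    apply bw_cos_pos
    apply bw_mem hn (Nat.cast_nonneg _)
    have : k ≤ n/2 := le_of_lt (Finset.mem_range.1 hk)
    exact_mod_cast this
  have hprodne : (∏ k ∈ Finset.range (n/2),
      (1 + Real.cos ((2*(k:ℝ)+1) * π / (2*(n:ℝ))))^2) ≠ 0 := by
    apply Finset.prod_ne_zero_iff.2
    intro k hk
    exact pow_ne_zero 2 (ne_of_gt (hposk k hk))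
  rw [Real.log_mul (pow_ne_zero _ (by norm_num : (2:ℝ) ≠ 0)) hprodne, Real.log_pow,
    Real.log_prod (fun k hk => pow_ne_zero 2 (ne_of_gt (hposk k hk)))]
  simp only [Real.log_pow, Nat.cast_ofNat]
  rw [← Finset.mul_sum]
  have hsum : (∑ k ∈ Finset.range (n/2),
      Real.log (1 + Real.cos ((2*(k:ℝ)+1) * π / (2*(n:ℝ)))))
      = ∑ k ∈ Finset.range (n/2),
        Real.log (1 + Real.cos (π/(n:ℝ) * (k:ℝ) + π/(2*(n:ℝ)))) := by
    apply Finset.sum_congr rfl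
    intro k _
    rw [harg k]
  rw [← hsum]
  set T := ∑ k ∈ Finset.range (n/2),
      Real.log (1 + Real.cos ((2*(k:ℝ)+1) * π / (2*(n:ℝ)))) with hT
  field_simp

end BorweinAux3
end

section
/- Let p_1, …, p_m be nonzero polynomials with complex coefficients, let p = ∏_{k=1}^m p_k, and let n = deg p. Then ∏_{k=1}^m ‖p_k‖_D ≤ e^n ‖p‖_D, where D = {z ∈ ℂ : |z| ≤ 1} is the closed unit disk and e is Euler's number. -/
open Polynomial Set Metric
open scoped ComplexConjugate

namespace Gelfond

local notation "𝔻" => Metric.closedBall (0:ℂ) 1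

lemma bdd (p : Polynomial ℂ) :
    BddAbove (Set.range fun z : 𝔻 => ‖p.eval (z : ℂ)‖) := by
  obtain ⟨C, hC⟩ := ((isCompact_closedBall (0:ℂ) 1).image
    (continuous_norm.comp p.continuous)).bddAbove
  refine ⟨C, ?_⟩
  rintro y ⟨z, rfl⟩
  exact hC ⟨z.1, z.2, rfl⟩

lemma abs_eval_le_polyNorm (p : Polynomial ℂ) {z : ℂ} (hz : z ∈ 𝔻) :
    ‖p.eval z‖ ≤ polyNorm 𝔻 p :=
  le_ciSup (bdd p) ⟨z, hz⟩

instance : Nonempty (𝔻 : Set ℂ) := ⟨⟨0, by simp⟩⟩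

lemma polyNorm_le {p : Polynomial ℂ} {C : ℝ} (h : ∀ z ∈ 𝔻, ‖p.eval z‖ ≤ C) :
    polyNorm 𝔻 p ≤ C :=
  ciSup_le fun z => h z z.2

lemma polyNorm_nonneg (p : Polynomial ℂ) : 0 ≤ polyNorm 𝔻 p :=
  le_trans (norm_nonneg _) (abs_eval_le_polyNorm p (by simp : (0:ℂ) ∈ 𝔻))

/-- Mahler measure. -/
noncomputable def mahler (p : Polynomial ℂ) : ℝ :=
  ‖p.leadingCoeff‖ * (p.roots.map fun α => max 1 ‖α‖).prod

lemma norm_mprod (s : Multiset ℂ) : ‖s.prod‖ = (s.map fun x => ‖x‖).prod :=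
  map_multiset_prod (normHom : ℂ →*₀ ℝ) s

lemma mahler_nonneg (p : Polynomial ℂ) : 0 ≤ mahler p := by
  refine mul_nonneg (norm_nonneg _) (Multiset.prod_nonneg ?_)
  intro a ha
  obtain ⟨α, -, rfl⟩ := Multiset.mem_map.1 ha
  exact le_trans zero_le_one (le_max_left _ _)

lemma mahler_mul {p q : Polynomial ℂ} (hp : p ≠ 0) (hq : q ≠ 0) :
    mahler (p * q) = mahler p * mahler q := by
  unfold mahler
  rw [roots_mul (mul_ne_zero hp hq), leadingCoeff_mul, norm_mul, Multiset.map_add,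
    Multiset.prod_add]
  ring


noncomputable def g (α : ℂ) : ℂ := if 1 < ‖α‖ then conj α else 1
noncomputable def h (α : ℂ) : ℂ := if 1 < ‖α‖ then -1 else -α

noncomputable def f (α : ℂ) : Polynomial ℂ := C (g α) * X + C (h α)

lemma g_ne_zero (α : ℂ) : g α ≠ 0 := by
  unfold g
  split
  · rename_i hgt
    intro hc
    rw [show (0:ℂ) = conj 0 by simp] at hc
    have := (starRingEnd ℂ).injective hc
    rw [this] at hgt
    simp at hgt
    linarith
  · exact one_ne_zero

lemma abs_g (α : ℂ) : ‖g α‖ = max 1 ‖α‖ := by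
  unfold g
  split
  · rw [Complex.norm_conj]
    exact (max_eq_right (le_of_lt (by assumption))).symm
  · simp only [norm_one]
    exact (max_eq_left (le_of_not_gt (by assumption))).symm

lemma f_natDegree (α : ℂ) : (f α).natDegree = 1 := natDegree_linear (g_ne_zero α)

lemma f_leadingCoeff (α : ℂ) : (f α).leadingCoeff = g α := leadingCoeff_linear (g_ne_zero α)

lemma f_ne_zero (α : ℂ) : f α ≠ 0 := fun hc => by
  have := f_natDegree α
  rw [hc] at this
  simp at this

lemma abs_f_eval {z : ℂ} (hz : ‖z‖ = 1) (α : ℂ) :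
    ‖(f α).eval z‖ = ‖z - α‖ := by
  have hz1 : z * conj z = 1 := by
    rw [Complex.mul_conj, Complex.normSq_eq_norm_sq, hz]
    norm_num
  unfold f g h
  simp only [eval_add, eval_mul, eval_C, eval_X]
  split
  · have heq : conj α * z + -1 = (conj (α - z)) * z := by
      rw [map_sub]
      linear_combination hz1
    rw [heq, norm_mul, Complex.norm_conj, hz, mul_one]
    exact norm_sub_rev α z
  · rw [show (1:ℂ) * z + -α = z - α by ring]


lemma coeff_extract (q : Polynomial ℂ) (n : ℕ) (hq : q.natDegree < n + 1) :
    ((n + 1 : ℕ) : ℂ) * q.coeff n =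
      ∑ k ∈ Finset.range (n + 1),
        Complex.exp (2 * Real.pi * Complex.I / (n + 1)) ^ k *
          q.eval (Complex.exp (2 * Real.pi * Complex.I / (n + 1)) ^ k) := by
  set ζ : ℂ := Complex.exp (2 * Real.pi * Complex.I / (n + 1)) with hζdef
  have hprim : IsPrimitiveRoot ζ (n + 1) := by
    have := Complex.isPrimitiveRoot_exp (n + 1) (Nat.succ_ne_zero n)
    rw [hζdef]
    convert this using 2
    push_cast
    ring
  have hone : ζ ^ (n + 1) = 1 := hprim.pow_eq_one
  have key : ∀ j < n + 1,
      (∑ k ∈ Finset.range (n + 1), (ζ ^ (j + 1)) ^ k) = if j = n then ((n + 1 : ℕ) : ℂ) else 0 := by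
    intro j hj
    by_cases hjn : j = n
    · subst hjn
      rw [if_pos rfl, hone]
      simp
    · rw [if_neg hjn]
      have h1 : ζ ^ (j + 1) ≠ 1 :=
        hprim.pow_ne_one_of_pos_of_lt (Nat.succ_ne_zero j) (by omega)
      rw [geom_sum_eq h1]
      have h2 : (ζ ^ (j + 1)) ^ (n + 1) = 1 := by
        rw [← pow_mul, mul_comm, pow_mul, hone, one_pow]
      rw [h2]
      simp
  symm
  calc ∑ k ∈ Finset.range (n + 1), ζ ^ k * q.eval (ζ ^ k)
      = ∑ k ∈ Finset.range (n + 1), ∑ j ∈ Finset.range (n + 1),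
          q.coeff j * (ζ ^ (j + 1)) ^ k := by
        refine Finset.sum_congr rfl fun k _ => ?_
        rw [eval_eq_sum_range' hq, Finset.mul_sum]
        refine Finset.sum_congr rfl fun j _ => ?_
        rw [← pow_mul, ← pow_mul, show (j + 1) * k = k + k * j from by ring, pow_add]
        ring
    _ = ∑ j ∈ Finset.range (n + 1), ∑ k ∈ Finset.range (n + 1),
          q.coeff j * (ζ ^ (j + 1)) ^ k := Finset.sum_comm
    _ = ∑ j ∈ Finset.range (n + 1), q.coeff j *
          (if j = n then ((n + 1 : ℕ) : ℂ) else 0) := by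
        refine Finset.sum_congr rfl fun j hj => ?_
        rw [← Finset.mul_sum, key j (Finset.mem_range.1 hj)]
    _ = ((n + 1 : ℕ) : ℂ) * q.coeff n := by
        simp only [mul_ite, mul_zero]
        rw [Finset.sum_ite_eq' (Finset.range (n + 1)) n (fun j => q.coeff j * ((n + 1 : ℕ) : ℂ))]
        rw [if_pos (Finset.mem_range.2 (Nat.lt_succ_self n))]
        ring


lemma abs_zeta (n : ℕ) : ‖(Complex.exp (2 * Real.pi * Complex.I / (n + 1)))‖ = 1 := by
  rw [show (2 * (Real.pi : ℂ) * Complex.I / ((n : ℂ) + 1))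
      = (((2 * Real.pi / (n + 1) : ℝ)) : ℂ) * Complex.I by push_cast; ring,
    Complex.norm_exp_ofReal_mul_I]

lemma mahler_le_polyNorm {p : Polynomial ℂ} (hp : p ≠ 0) : mahler p ≤ polyNorm 𝔻 p := by
  have ha : p.leadingCoeff ≠ 0 := leadingCoeff_ne_zero.2 hp
  have hsplit : Splits p := IsAlgClosed.splits p
  have hcard : p.roots.card = p.natDegree := by
    exact hsplit.natDegree_eq_card_roots.symm
  set n := p.natDegree with hn
  set q : Polynomial ℂ := C p.leadingCoeff * (p.roots.map f).prod with hqdef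
  have hfz : (0 : Polynomial ℂ) ∉ p.roots.map f := by
    intro h0
    obtain ⟨α, -, hα⟩ := Multiset.mem_map.1 h0
    exact f_ne_zero α hα
  have hqdeg : q.natDegree = n := by
    rw [hqdef, natDegree_C_mul ha, natDegree_multiset_prod _ hfz, Multiset.map_map]
    simp only [Function.comp, f_natDegree]
    rw [Multiset.map_const', Multiset.sum_replicate, smul_eq_mul, mul_one, hcard]
  have hlead : ‖q.leadingCoeff‖ = mahler p := by
    rw [hqdef, leadingCoeff_mul, leadingCoeff_C, leadingCoeff_multiset_prod, Multiset.map_map,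
      norm_mul]
    unfold mahler
    congr 1
    rw [norm_mprod, Multiset.map_map]
    refine congrArg _ (Multiset.map_congr rfl fun α _ => ?_)
    simp only [Function.comp_apply]
    rw [f_leadingCoeff, abs_g]
  have hval : ∀ z : ℂ, ‖z‖ = 1 →
      ‖q.eval z‖ = ‖p.eval z‖ := by
    intro z hz
    conv_rhs => rw [hsplit.eq_prod_roots]
    rw [hqdef, eval_mul, eval_C, eval_multiset_prod, eval_mul, eval_C, eval_multiset_prod,
      norm_mul, norm_mul]
    congr 1
    rw [Multiset.map_map, Multiset.map_map, norm_mprod, norm_mprod,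
      Multiset.map_map, Multiset.map_map]
    refine congrArg _ (Multiset.map_congr rfl fun α _ => ?_)
    simp only [Function.comp_apply]
    rw [abs_f_eval hz α, eval_sub, eval_X, eval_C]
  -- extract the top coefficient of q by averaging over roots of unity
  set ζ : ℂ := Complex.exp (2 * Real.pi * Complex.I / (n + 1)) with hζ
  have hkey := coeff_extract q n (by rw [hqdeg]; exact Nat.lt_succ_self n)
  have hζ1 : ‖ζ‖ = 1 := abs_zeta n
  have hmem : ∀ k : ℕ, (ζ ^ k) ∈ 𝔻 := by
    intro k
    rw [Metric.mem_closedBall, Complex.dist_eq, sub_zero, norm_pow, hζ1, one_pow]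
  have hterm : ∀ k ∈ Finset.range (n + 1),
      ‖ζ ^ k * q.eval (ζ ^ k)‖ ≤ polyNorm 𝔻 p := by
    intro k _
    rw [norm_mul, norm_pow, hζ1, one_pow, one_mul, hval _ (by rw [norm_pow, hζ1, one_pow])]
    exact abs_eval_le_polyNorm p (hmem k)
  have hsum : ‖((n + 1 : ℕ) : ℂ) * q.coeff n‖ ≤ ((n + 1 : ℕ) : ℝ) * polyNorm 𝔻 p := by
    rw [hkey]
    calc ‖∑ k ∈ Finset.range (n + 1), ζ ^ k * q.eval (ζ ^ k)‖
        ≤ ∑ k ∈ Finset.range (n + 1), ‖ζ ^ k * q.eval (ζ ^ k)‖ :=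
          norm_sum_le _ _
      _ ≤ ∑ _k ∈ Finset.range (n + 1), polyNorm 𝔻 p := Finset.sum_le_sum hterm
      _ = ((n + 1 : ℕ) : ℝ) * polyNorm 𝔻 p := by
          rw [Finset.sum_const, Finset.card_range, nsmul_eq_mul]
  rw [norm_mul, Complex.norm_natCast] at hsum
  have hNpos : (0 : ℝ) < ((n + 1 : ℕ) : ℝ) := by positivity
  have := (mul_le_mul_iff_of_pos_left hNpos).1 hsum
  rwa [show q.coeff n = q.leadingCoeff by rw [← hqdeg]; exact coeff_natDegree, hlead] at this

lemma prod_map_le {s : Multiset ℂ} {u v : ℂ → ℝ} (h0 : ∀ α, 0 ≤ u α) (hle : ∀ α, u α ≤ v α) :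
    (s.map u).prod ≤ (s.map v).prod := by
  induction s using Multiset.induction_on with
  | empty => simp
  | cons a s ih =>
    simp only [Multiset.map_cons, Multiset.prod_cons]
    refine mul_le_mul (hle a) ih (Multiset.prod_nonneg ?_) (le_trans (h0 a) (hle a))
    intro x hx
    obtain ⟨α, -, rfl⟩ := Multiset.mem_map.1 hx
    exact h0 α

set_option maxHeartbeats 1000000 in
lemma polyNorm_le_two_pow {p : Polynomial ℂ} (hp : p ≠ 0) :
    polyNorm 𝔻 p ≤ 2 ^ p.natDegree * mahler p := by
  have hsplit : Splits p := IsAlgClosed.splits p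
  have hcard : p.roots.card = p.natDegree := by
    exact hsplit.natDegree_eq_card_roots.symm
  refine polyNorm_le fun z hz => ?_
  have hz1 : ‖z‖ ≤ 1 := by
    rw [Metric.mem_closedBall, Complex.dist_eq, sub_zero] at hz
    exact hz
  conv_lhs => rw [hsplit.eq_prod_roots]
  rw [eval_mul, eval_C, eval_multiset_prod, norm_mul, norm_mprod,
    Multiset.map_map, Multiset.map_map]
  have hpt : ∀ α : ℂ, (((fun x : ℂ => ‖x‖) ∘ eval z) ∘ fun a => X - C a) α ≤ 2 * max 1 ‖α‖ := by
    intro α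
    show ‖(X - C α).eval z‖ ≤ _
    rw [eval_sub, eval_X, eval_C]
    calc ‖z - α‖ ≤ ‖z‖ + ‖α‖ := norm_sub_le z α
      _ ≤ 1 + ‖α‖ := by linarith
      _ ≤ max 1 ‖α‖ + max 1 ‖α‖ :=
          add_le_add (le_max_left _ _) (le_max_right _ _)
      _ = 2 * max 1 ‖α‖ := by ring
  have hle : (Multiset.map (((fun x : ℂ => ‖x‖) ∘ eval z) ∘ fun a => X - C a) p.roots).prod ≤
      (Multiset.map (fun α => 2 * max 1 ‖α‖) p.roots).prod :=
    prod_map_le (fun α => norm_nonneg _) hpt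
  calc ‖p.leadingCoeff‖ *
        (Multiset.map (((fun x : ℂ => ‖x‖) ∘ eval z) ∘ fun a => X - C a) p.roots).prod
      ≤ ‖p.leadingCoeff‖ *
        (Multiset.map (fun α => 2 * max 1 ‖α‖) p.roots).prod :=
        mul_le_mul_of_nonneg_left hle (norm_nonneg _)
    _ = 2 ^ p.natDegree * mahler p := by
        rw [Multiset.prod_map_mul, Multiset.map_const', Multiset.prod_replicate, hcard]
        unfold mahler
        ring

lemma mahler_finset_prod {ι : Type*} [DecidableEq ι] (s : Finset ι) (p : ι → Polynomial ℂ)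
    (hp : ∀ k, p k ≠ 0) : mahler (∏ k ∈ s, p k) = ∏ k ∈ s, mahler (p k) := by
  induction s using Finset.induction_on with
  | empty => simp [mahler]
  | insert a s hnot ih =>
    rw [Finset.prod_insert hnot, Finset.prod_insert hnot,
      mahler_mul (hp a) (Finset.prod_ne_zero_iff.2 fun k _ => hp k), ih]

end Gelfond

theorem gelfond_inequality (m : ℕ) (p : Fin m → Polynomial ℂ) (hp : ∀ k, p k ≠ 0) :
    ∏ k, polyNorm (closedBall (0:ℂ) 1) (p k) ≤
      Real.exp 1 ^ (∏ k, p k).natDegree * polyNorm (closedBall (0:ℂ) 1) (∏ k, p k) := by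
  have hP : (∏ k, p k) ≠ 0 := Finset.prod_ne_zero_iff.2 fun k _ => hp k
  have hdeg : (∏ k, p k).natDegree = ∑ k, (p k).natDegree :=
    Polynomial.natDegree_prod _ _ fun k _ => hp k
  calc ∏ k, polyNorm (closedBall (0:ℂ) 1) (p k)
      ≤ ∏ k, (2 ^ (p k).natDegree * Gelfond.mahler (p k)) :=
        Finset.prod_le_prod (fun k _ => Gelfond.polyNorm_nonneg (p k))
          (fun k _ => Gelfond.polyNorm_le_two_pow (hp k))
    _ = 2 ^ (∏ k, p k).natDegree * Gelfond.mahler (∏ k, p k) := by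
        rw [Finset.prod_mul_distrib, Finset.prod_pow_eq_pow_sum, hdeg,
          Gelfond.mahler_finset_prod _ _ hp]
    _ ≤ 2 ^ (∏ k, p k).natDegree * polyNorm (closedBall (0:ℂ) 1) (∏ k, p k) :=
        mul_le_mul_of_nonneg_left (Gelfond.mahler_le_polyNorm hP) (by positivity)
    _ ≤ Real.exp 1 ^ (∏ k, p k).natDegree * polyNorm (closedBall (0:ℂ) 1) (∏ k, p k) := by
        refine mul_le_mul_of_nonneg_right
          (pow_le_pow_left₀ (by norm_num) ?_ _) (Gelfond.polyNorm_nonneg _)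
        have := Real.add_one_le_exp 1
        linarith
end
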